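/- arXiv:2012.12920 — 5 statements merged into one kernel-verified Lean document; each statement's English description precedes it below -/
import Mathlib

section
/- Let b ∈ ℂ with Re(b) ≥ 0, and let A on L²(ℝ⁺) have domain {f ∈ H²(ℝ⁺) : f'(0) = b f(0)} with Af = -i f'' + i f. Then for every f ∈ D(A), Im⟨f, Af⟩ = Re(b)·|f(0)|² + ‖f'‖² + ‖f‖²; in particular A is dissipative. -/
open MeasureTheory Set Filter Complex ComplexConjugate Topology ENNReal NNReal

private lemma holder_mul {μ : Measure ℝ} {u v : ℝ → ℂ}
    (hu : MemLp u 2 μ) (hv : MemLp v 2 μ) :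
    Integrable (fun x => u x * v x) μ := by
  have hpqr : (1:ℝ≥0∞) / 1 = 1 / 2 + 1 / 2 := by
    rw [ENNReal.div_add_div_same]
    norm_num
    exact (ENNReal.div_self (by norm_num) (by norm_num)).symm
  have h : MemLp (u • v) 1 μ := hv.smul (r := 1) hu
  rw [memLp_one_iff_integrable] at h
  exact h

private lemma memconj {μ : Measure ℝ} {u : ℝ → ℂ} (hu : MemLp u 2 μ) :
    MemLp (fun x => conj (u x)) 2 μ := by
  refine ⟨RCLike.continuous_conj.comp_aestronglyMeasurable hu.1, ?_⟩
  have : eLpNorm (conj u) 2 μ = eLpNorm u 2 μ := eLpNorm_conj u 2 μ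
  calc eLpNorm (fun x => conj (u x)) 2 μ = eLpNorm u 2 μ := this
    _ < ⊤ := hu.2

private lemma sym_fubini {R : ℝ} {u w : ℝ → ℂ}
    (hu : IntegrableOn u (Ioc 0 R)) (hw : IntegrableOn w (Ioc 0 R)) :
    (∫ x in Ioc (0:ℝ) R, w x * ∫ t in Ioc (0:ℝ) x, u t)
      + (∫ t in Ioc (0:ℝ) R, u t * ∫ x in Ioc (0:ℝ) t, w x)
    = (∫ x in Ioc (0:ℝ) R, w x) * (∫ t in Ioc (0:ℝ) R, u t) := by
  set μ := volume.restrict (Ioc (0:ℝ) R) with hμdef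
  have hs : MeasurableSet {p : ℝ × ℝ | p.2 ≤ p.1} :=
    measurableSet_le measurable_snd measurable_fst
  have hprod : Integrable (fun p : ℝ × ℝ => w p.1 * u p.2) (μ.prod μ) := hw.mul_prod hu
  have hF : Integrable ({p : ℝ × ℝ | p.2 ≤ p.1}.indicator fun p => w p.1 * u p.2) (μ.prod μ) :=
    hprod.indicator hs
  have hG : Integrable ({p : ℝ × ℝ | p.2 ≤ p.1}ᶜ.indicator fun p => w p.1 * u p.2) (μ.prod μ) :=
    hprod.indicator hs.compl
  have hFeq : (∫ p, ({p : ℝ × ℝ | p.2 ≤ p.1}.indicator fun p => w p.1 * u p.2) p ∂(μ.prod μ))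
      = ∫ x in Ioc (0:ℝ) R, w x * ∫ t in Ioc (0:ℝ) x, u t := by
    rw [integral_prod _ hF]
    refine setIntegral_congr_fun measurableSet_Ioc (fun x hx => ?_)
    have h1 : (fun t => ({p : ℝ × ℝ | p.2 ≤ p.1}.indicator (fun p => w p.1 * u p.2)) (x, t))
        = (Iic x).indicator (fun t => w x * u t) := by
      funext t; by_cases h : t ≤ x <;> simp [Set.indicator, h]
    rw [h1, integral_indicator measurableSet_Iic, hμdef,
      Measure.restrict_restrict measurableSet_Iic, integral_const_mul]
    have h2 : Iic x ∩ Ioc (0:ℝ) R = Ioc (0:ℝ) x := by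
      ext t
      simp only [mem_inter_iff, mem_Iic, mem_Ioc]
      constructor
      · rintro ⟨ha, hb, hc⟩; exact ⟨hb, ha⟩
      · rintro ⟨ha, hb⟩; exact ⟨hb, ha, hb.trans hx.2⟩
    rw [h2]
  have hGeq : (∫ p, ({p : ℝ × ℝ | p.2 ≤ p.1}ᶜ.indicator fun p => w p.1 * u p.2) p ∂(μ.prod μ))
      = ∫ t in Ioc (0:ℝ) R, u t * ∫ x in Ioc (0:ℝ) t, w x := by
    rw [integral_prod_symm _ hG]
    refine setIntegral_congr_fun measurableSet_Ioc (fun t ht => ?_)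
    have h1 : (fun x => ({p : ℝ × ℝ | p.2 ≤ p.1}ᶜ.indicator (fun p => w p.1 * u p.2)) (x, t))
        = (Iio t).indicator (fun x => w x * u t) := by
      funext x
      by_cases h : x < t
      · simp [Set.indicator, h, not_le.mpr h]
      · simp [Set.indicator, h, not_lt.mp h]
    rw [h1, integral_indicator measurableSet_Iio, hμdef,
      Measure.restrict_restrict measurableSet_Iio, integral_mul_const]
    have h2 : Iio t ∩ Ioc (0:ℝ) R = Ioo (0:ℝ) t := by
      ext x
      simp only [mem_inter_iff, mem_Iio, mem_Ioc, mem_Ioo]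
      constructor
      · rintro ⟨ha, hb, hc⟩; exact ⟨hb, ha⟩
      · rintro ⟨ha, hb⟩; exact ⟨hb, ha, (hb.trans_le ht.2).le⟩
    rw [h2, ← integral_Ioc_eq_integral_Ioo, mul_comm]
  have hcomb : (∫ p, (({p : ℝ × ℝ | p.2 ≤ p.1}.indicator fun p => w p.1 * u p.2) p
        + ({p : ℝ × ℝ | p.2 ≤ p.1}ᶜ.indicator fun p => w p.1 * u p.2) p) ∂(μ.prod μ))
      = (∫ x in Ioc (0:ℝ) R, w x) * (∫ t in Ioc (0:ℝ) R, u t) := by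
    have h1 : (fun p : ℝ × ℝ => ({p : ℝ × ℝ | p.2 ≤ p.1}.indicator fun p => w p.1 * u p.2) p
        + ({p : ℝ × ℝ | p.2 ≤ p.1}ᶜ.indicator fun p => w p.1 * u p.2) p)
        = fun p : ℝ × ℝ => w p.1 * u p.2 := by
      funext p
      by_cases h : p ∈ {p : ℝ × ℝ | p.2 ≤ p.1} <;> simp [Set.indicator, h]
    rw [h1, integral_prod_mul]
  rw [← hFeq, ← hGeq, ← integral_add hF hG, hcomb]

private lemma int_mul_prim {R : ℝ} {g h : ℝ → ℂ} (hg : IntegrableOn g (Ioc 0 R))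
    (hh : IntegrableOn h (Ioc 0 R)) :
    IntegrableOn (fun t => g t * ∫ s in Ioc (0:ℝ) t, h s) (Ioc 0 R) := by
  have hIcc : IntegrableOn h (Icc 0 R) := by
    rcases le_or_gt 0 R with hR | hR
    · rwa [integrableOn_Icc_iff_integrableOn_Ioc]
    · rw [Icc_eq_empty (by linarith)]; exact integrableOn_empty
  have hcont : ContinuousOn (fun t => ∫ s in Ioc (0:ℝ) t, h s) (Icc 0 R) :=
    intervalIntegral.continuousOn_primitive hIcc
  have hmeas : AEStronglyMeasurable (fun t => ∫ s in Ioc (0:ℝ) t, h s)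
      (volume.restrict (Ioc 0 R)) :=
    (hcont.aestronglyMeasurable measurableSet_Icc).mono_measure
      (Measure.restrict_mono Ioc_subset_Icc_self le_rfl)
  have hbdd : ∀ᵐ t ∂(volume.restrict (Ioc (0:ℝ) R)),
      ‖∫ s in Ioc (0:ℝ) t, h s‖ ≤ ∫ s in Ioc (0:ℝ) R, ‖h s‖ := by
    rw [ae_restrict_iff' measurableSet_Ioc]
    refine ae_of_all _ fun t ht => ?_
    refine (norm_integral_le_integral_norm _).trans ?_
    exact setIntegral_mono_set hh.norm (ae_of_all _ fun s => norm_nonneg _)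
      (HasSubset.Subset.eventuallyLE (Ioc_subset_Ioc le_rfl ht.2))
  have h1 := Integrable.bdd_mul (c := ∫ s in Ioc (0:ℝ) R, ‖h s‖) hg hmeas hbdd
  exact h1.congr (ae_of_all _ fun x => mul_comm _ _)

private lemma tendsto_lim_zero {g : ℝ → ℂ} {L : ℂ}
    (hg : Integrable g (volume.restrict (Ioi (0:ℝ))))
    (h : Tendsto g atTop (𝓝 L)) : L = 0 := by
  by_contra hL
  have hnorm : Tendsto (fun x => ‖g x‖) atTop (𝓝 ‖L‖) := h.norm
  have hpos : (0:ℝ) < ‖L‖ := norm_pos_iff.mpr hL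
  have hev : ∀ᶠ x in atTop, ‖L‖ / 2 < ‖g x‖ :=
    hnorm.eventually (eventually_gt_nhds (by linarith))
  obtain ⟨M, hM⟩ := eventually_atTop.mp hev
  set M' := max M 0 with hM'def
  have hsub : Ioi M' ⊆ Ioi (0:ℝ) := Ioi_subset_Ioi (le_max_right _ _)
  have hint : IntegrableOn g (Ioi M') := by
    have h2 := hg.restrict (s := Ioi M')
    rwa [Measure.restrict_restrict measurableSet_Ioi, inter_eq_left.mpr hsub] at h2
  have hfin : (∫⁻ a in Ioi M', ‖g a‖₊) < ⊤ := hint.2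
  have hbot : ENNReal.ofReal (‖L‖ / 2) * volume (Ioi M') ≤ ∫⁻ a in Ioi M', ‖g a‖₊ := by
    rw [← setLIntegral_const]
    refine lintegral_mono_ae ?_
    rw [ae_restrict_iff' measurableSet_Ioi]
    refine ae_of_all _ fun x hx => ?_
    have hx' : M ≤ x := le_trans (le_max_left _ _) (le_of_lt hx)
    calc ENNReal.ofReal (‖L‖ / 2) ≤ ENNReal.ofReal ‖g x‖ :=
          ENNReal.ofReal_le_ofReal (hM x hx').le
      _ = (‖g x‖₊ : ℝ≥0∞) := ofReal_norm _
  rw [Real.volume_Ioi, ENNReal.mul_top ((ENNReal.ofReal_pos.mpr (by linarith)).ne')] at hbot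
  exact absurd (lt_of_le_of_lt hbot hfin) (lt_irrefl _)

/-- For `b ∈ ℂ` with `Re b ≥ 0`, the operator `A f = -i f'' + i f` on `L²(ℝ⁺)` with domain
`{f ∈ H²(ℝ⁺) : f'(0) = b f(0)}` satisfies, for every `f` in its domain,
`Im ⟪f, A f⟫ = Re(b)·|f(0)|² + ‖f'‖² + ‖f‖²`; in particular `A` is dissipative.
Membership `f ∈ H²(ℝ⁺)` is encoded by `f, f', f'' ∈ L²(0,∞)` together with the absolute
continuity relations `f x = f 0 + ∫₀ˣ f'` and `f' x = f' 0 + ∫₀ˣ f''`. -/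
theorem stmt_3 (b : ℂ) (hb : 0 ≤ b.re) (f f' f'' : ℝ → ℂ)
    (hf : MemLp f 2 (volume.restrict (Set.Ioi (0 : ℝ))))
    (hf' : MemLp f' 2 (volume.restrict (Set.Ioi (0 : ℝ))))
    (hf'' : MemLp f'' 2 (volume.restrict (Set.Ioi (0 : ℝ))))
    (hrep : ∀ x : ℝ, 0 ≤ x → f x = f 0 + ∫ t in (0 : ℝ)..x, f' t)
    (hrep' : ∀ x : ℝ, 0 ≤ x → f' x = f' 0 + ∫ t in (0 : ℝ)..x, f'' t)
    (hbc : f' 0 = b * f 0) :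
    (∫ x in Set.Ioi (0 : ℝ),
        (starRingEnd ℂ) (f x) * (-Complex.I * f'' x + Complex.I * f x)).im
      = b.re * ‖f 0‖ ^ 2 + (∫ x in Set.Ioi (0 : ℝ), ‖f' x‖ ^ 2)
        + ∫ x in Set.Ioi (0 : ℝ), ‖f x‖ ^ 2 ∧
    0 ≤ (∫ x in Set.Ioi (0 : ℝ),
        (starRingEnd ℂ) (f x) * (-Complex.I * f'' x + Complex.I * f x)).im := by
  have hcf : MemLp (fun x => conj (f x)) 2 (volume.restrict (Set.Ioi (0:ℝ))) := memconj hf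
  have hcf' : MemLp (fun x => conj (f' x)) 2 (volume.restrict (Set.Ioi (0:ℝ))) := memconj hf'
  have h1 : Integrable (fun x => conj (f x) * f'' x) (volume.restrict (Set.Ioi (0:ℝ))) :=
    holder_mul hcf hf''
  have h2 : Integrable (fun x => conj (f' x) * f' x) (volume.restrict (Set.Ioi (0:ℝ))) :=
    holder_mul hcf' hf'
  have h3 : Integrable (fun x => conj (f x) * f x) (volume.restrict (Set.Ioi (0:ℝ))) :=
    holder_mul hcf hf
  have hgint : Integrable (fun x => conj (f x) * f' x) (volume.restrict (Set.Ioi (0:ℝ))) :=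
    holder_mul hcf hf'
  have hsum : Integrable (fun x => conj (f' x) * f' x + conj (f x) * f'' x)
      (volume.restrict (Set.Ioi (0:ℝ))) := h2.add h1
  -- restriction of MemLp functions to finite intervals
  have hres : ∀ {u : ℝ → ℂ}, MemLp u 2 (volume.restrict (Set.Ioi (0:ℝ))) →
      ∀ R : ℝ, IntegrableOn u (Ioc 0 R) := by
    intro u hu R
    have h := hu.restrict (Ioc (0:ℝ) R)
    rw [Measure.restrict_restrict measurableSet_Ioc,
      inter_eq_left.mpr Ioc_subset_Ioi_self] at h
    haveI : IsFiniteMeasure (volume.restrict (Ioc (0:ℝ) R)) :=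
      ⟨by rw [Measure.restrict_apply_univ]; exact measure_Ioc_lt_top⟩
    exact h.integrable one_le_two
  have hf'res : ∀ R : ℝ, IntegrableOn f' (Ioc 0 R) := hres hf'
  have hf''res : ∀ R : ℝ, IntegrableOn f'' (Ioc 0 R) := hres hf''
  have hcf'res : ∀ R : ℝ, IntegrableOn (fun x => conj (f' x)) (Ioc 0 R) := hres hcf'
  -- key integration-by-parts identity on [0, R]
  have hkey : ∀ R : ℝ, 0 ≤ R →
      (∫ t in Ioc (0:ℝ) R, (conj (f' t) * f' t + conj (f t) * f'' t))
        = conj (f R) * f' R - conj (f 0) * f' 0 := by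
    intro R hR
    have hA : conj (f R) = conj (f 0) + ∫ t in Ioc (0:ℝ) R, conj (f' t) := by
      have h := congrArg (starRingEnd ℂ) (hrep R hR)
      rw [map_add] at h
      rw [h, intervalIntegral.integral_of_le hR, integral_conj]
    have hB : f' R = f' 0 + ∫ t in Ioc (0:ℝ) R, f'' t := by
      have h := hrep' R hR
      rwa [intervalIntegral.integral_of_le hR] at h
    have hptw : ∀ t ∈ Ioc (0:ℝ) R,
        conj (f' t) * f' t + conj (f t) * f'' t
          = (conj (f' t) * f' 0 + conj (f' t) * ∫ s in Ioc (0:ℝ) t, f'' s)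
            + (conj (f 0) * f'' t + f'' t * ∫ s in Ioc (0:ℝ) t, conj (f' s)) := by
      intro t ht
      have e1 : conj (f t) = conj (f 0) + ∫ s in Ioc (0:ℝ) t, conj (f' s) := by
        have h := congrArg (starRingEnd ℂ) (hrep t ht.1.le)
        rw [map_add] at h
        rw [h, intervalIntegral.integral_of_le ht.1.le, integral_conj]
      have e2 : f' t = f' 0 + ∫ s in Ioc (0:ℝ) t, f'' s := by
        have h := hrep' t ht.1.le
        rwa [intervalIntegral.integral_of_le ht.1.le] at h
      linear_combination (conj (f' t)) * e2 + f'' t * e1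
    rw [setIntegral_congr_fun measurableSet_Ioc hptw]
    have ia : IntegrableOn (fun t => conj (f' t) * f' 0) (Ioc 0 R) :=
      (hcf'res R).mul_const _
    have ib : IntegrableOn (fun t => conj (f' t) * ∫ s in Ioc (0:ℝ) t, f'' s) (Ioc 0 R) :=
      int_mul_prim (hcf'res R) (hf''res R)
    have ic : IntegrableOn (fun t => conj (f 0) * f'' t) (Ioc 0 R) :=
      (hf''res R).const_mul _
    have id' : IntegrableOn (fun t => f'' t * ∫ s in Ioc (0:ℝ) t, conj (f' s)) (Ioc 0 R) :=
      int_mul_prim (hf''res R) (hcf'res R)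
    have iab : IntegrableOn (fun t => conj (f' t) * f' 0
        + conj (f' t) * ∫ s in Ioc (0:ℝ) t, f'' s) (Ioc 0 R) := ia.add ib
    have icd : IntegrableOn (fun t => conj (f 0) * f'' t
        + f'' t * ∫ s in Ioc (0:ℝ) t, conj (f' s)) (Ioc 0 R) := ic.add id'
    rw [integral_add iab icd, integral_add ia ib, integral_add ic id',
      integral_mul_const, integral_const_mul]
    have hsym := sym_fubini (u := fun s => conj (f' s)) (w := f'') (hcf'res R) (hf''res R)
    linear_combination hsym - f' R * hA
      - (conj (f 0) + ∫ t in Ioc (0:ℝ) R, conj (f' t)) * hB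
  -- limit as R → ∞
  have htend1 : Tendsto (fun R => ∫ t in Ioc (0:ℝ) R, (conj (f' t) * f' t + conj (f t) * f'' t))
      atTop (𝓝 (∫ t in Ioi (0:ℝ), (conj (f' t) * f' t + conj (f t) * f'' t))) := by
    have h := intervalIntegral_tendsto_integral_Ioi (μ := volume) 0 hsum tendsto_id
    refine h.congr' ?_
    filter_upwards [eventually_ge_atTop (0:ℝ)] with R hR
    simp only [id_eq]
    rw [intervalIntegral.integral_of_le hR]
  have htend2 : Tendsto (fun R => conj (f R) * f' R) atTop
      (𝓝 (conj (f 0) * f' 0 + ∫ t in Ioi (0:ℝ), (conj (f' t) * f' t + conj (f t) * f'' t))) := by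
    have h := tendsto_const_nhds (x := conj (f 0) * f' 0) (f := atTop (α := ℝ)) |>.add htend1
    refine h.congr' ?_
    filter_upwards [eventually_ge_atTop (0:ℝ)] with R hR
    rw [hkey R hR]; ring
  have hL0 : conj (f 0) * f' 0
      + (∫ t in Ioi (0:ℝ), (conj (f' t) * f' t + conj (f t) * f'' t)) = 0 :=
    tendsto_lim_zero hgint htend2
  have hsplit : (∫ t in Ioi (0:ℝ), (conj (f' t) * f' t + conj (f t) * f'' t))
      = (∫ t in Ioi (0:ℝ), conj (f' t) * f' t) + ∫ t in Ioi (0:ℝ), conj (f t) * f'' t :=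
    integral_add h2 h1
  -- real-valued identities
  have hptr : ∀ (z : ℂ), conj z * z = ((‖z‖ ^ 2 : ℝ) : ℂ) := by
    intro z
    rw [← Complex.normSq_eq_conj_mul_self, Complex.normSq_eq_norm_sq]
  have hr1 : (∫ t in Ioi (0:ℝ), conj (f' t) * f' t)
      = ((∫ t in Ioi (0:ℝ), ‖f' t‖ ^ 2 : ℝ) : ℂ) :=
    calc (∫ t in Ioi (0:ℝ), conj (f' t) * f' t)
        = ∫ t in Ioi (0:ℝ), ((‖f' t‖ ^ 2 : ℝ) : ℂ) :=
          integral_congr_ae (ae_of_all _ fun t => hptr (f' t))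
      _ = ((∫ t in Ioi (0:ℝ), ‖f' t‖ ^ 2 : ℝ) : ℂ) := integral_ofReal (f := fun t => ‖f' t‖ ^ 2)
  have hr2 : (∫ t in Ioi (0:ℝ), conj (f t) * f t)
      = ((∫ t in Ioi (0:ℝ), ‖f t‖ ^ 2 : ℝ) : ℂ) :=
    calc (∫ t in Ioi (0:ℝ), conj (f t) * f t)
        = ∫ t in Ioi (0:ℝ), ((‖f t‖ ^ 2 : ℝ) : ℂ) :=
          integral_congr_ae (ae_of_all _ fun t => hptr (f t))
      _ = ((∫ t in Ioi (0:ℝ), ‖f t‖ ^ 2 : ℝ) : ℂ) := integral_ofReal (f := fun t => ‖f t‖ ^ 2)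
  have hZ : (∫ t in Ioi (0:ℝ), conj (f t) * f'' t)
      = -(conj (f 0) * f' 0) - ((∫ t in Ioi (0:ℝ), ‖f' t‖ ^ 2 : ℝ) : ℂ) := by
    linear_combination hL0 - hsplit - hr1
  have hT : (∫ x in Set.Ioi (0:ℝ), conj (f x) * (-Complex.I * f'' x + Complex.I * f x))
      = -Complex.I * (∫ x in Ioi (0:ℝ), conj (f x) * f'' x)
        + Complex.I * ∫ x in Ioi (0:ℝ), conj (f x) * f x := by
    rw [← integral_const_mul, ← integral_const_mul,
      ← integral_add (h1.const_mul _) (h3.const_mul _)]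
    exact integral_congr_ae (ae_of_all _ fun x => by ring)
  have hb0 : conj (f 0) * f' 0 = b * ((‖f 0‖ ^ 2 : ℝ) : ℂ) := by
    rw [hbc, show conj (f 0) * (b * f 0) = b * (conj (f 0) * f 0) by ring, hptr (f 0)]
  have heq : (∫ x in Set.Ioi (0 : ℝ),
        (starRingEnd ℂ) (f x) * (-Complex.I * f'' x + Complex.I * f x)).im
      = b.re * ‖f 0‖ ^ 2 + (∫ x in Set.Ioi (0 : ℝ), ‖f' x‖ ^ 2)
        + ∫ x in Set.Ioi (0 : ℝ), ‖f x‖ ^ 2 := by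
    rw [hT, hZ, hr2, hb0]
    simp only [Complex.add_im, Complex.mul_im, Complex.mul_re, Complex.I_re, Complex.I_im,
      Complex.neg_re, Complex.neg_im, Complex.sub_re, Complex.sub_im,
      Complex.ofReal_re, Complex.ofReal_im]
    ring
  refine ⟨heq, ?_⟩
  rw [heq]
  have hP' : 0 ≤ ∫ x in Set.Ioi (0:ℝ), ‖f' x‖ ^ 2 :=
    setIntegral_nonneg measurableSet_Ioi fun x _ => by positivity
  have hP : 0 ≤ ∫ x in Set.Ioi (0:ℝ), ‖f x‖ ^ 2 :=
    setIntegral_nonneg measurableSet_Ioi fun x _ => by positivity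
  have hb2 : 0 ≤ b.re * ‖f 0‖ ^ 2 := mul_nonneg hb (by positivity)
  linarith
end

section
/- Main theorem (sufficiency direction): Let A be a dissipative operator on a Hilbert space H whose form q_A(f) = Im⟨f,Af⟩ is closable and satisfies q_A(f) ≥ ε‖f‖² for some ε > 0; let V_A be the selfadjoint operator associated with the closure of q_A, and W_A the operator with domain ran(V_A^{1/2}↾D(A)) given by W_A g = A V_A^{-1/2} g. Let B ⊇ A be an extension with D(B) = D(A) ∔ 𝒱 for a complementary subspace 𝒱. If 𝒱 ⊂ D(W_A*) and Im⟨v, Bv⟩ ≥ (1/4)‖(V_A^{-1/2} B - W_A*) v‖² for every v ∈ 𝒱, then B is dissipative. -/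
open Filter Topology

local notation "⟪" x ", " y "⟫" => @inner ℂ _ _ x y

/-- **Main theorem, sufficiency direction.**
Let `A` be a dissipative operator on a complex Hilbert space `E` whose quadratic form
`q_A(f) = Im ⟪f, A f⟫` is closable and satisfies `q_A(f) ≥ ε ‖f‖²` for some `ε > 0`.
Let `V_A` be the selfadjoint operator associated with the closure of `q_A`.  Here `Q = V_A^{1/2}`
is encoded by the hypotheses `hQsym, hQpos` (it is a nonnegative symmetric operator) together
with `hQdom, hQval`, which say that the domain of `Q` is the domain of the closure of `q_A`
(limits of `q_A`-Cauchy sequences from `D(A)`) and `‖Q f‖² = q_A'(f)`; `R = V_A^{-1/2}` is its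
(bounded, everywhere defined) inverse.  The operator `W_A` has domain
`ran (V_A^{1/2} ↾ D(A)) = {g : R g ∈ D(A)}` and acts by `W_A g = A V_A^{-1/2} g`; membership
`v ∈ D(W_A^*)` with `W_A^* v = w` is expressed by `∀ g, R g ∈ D(A) → ⟪v, A (R g)⟫ = ⟪w, g⟫`.
If `B ⊇ A` is an extension with `D(B) = D(A) ∔ 𝒱` and every `v ∈ 𝒱` lies in `D(W_A^*)` and
satisfies `Im ⟪v, B v⟫ ≥ (1/4) ‖(V_A^{-1/2} B - W_A^*) v‖²`, then `B` is dissipative. -/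
theorem stmt_5 {E : Type*} [NormedAddCommGroup E] [InnerProductSpace ℂ E] [CompleteSpace E]
    (A : E →ₗ.[ℂ] E) (hdense : Dense (A.domain : Set E))
    (hdiss : ∀ f : A.domain, 0 ≤ (⟪(f : E), A f⟫).im)
    (ε : ℝ) (hε : 0 < ε)
    (hpos : ∀ f : A.domain, ε * ‖(f : E)‖ ^ 2 ≤ (⟪(f : E), A f⟫).im)
    (Q : E →ₗ.[ℂ] E)
    (hQsym : ∀ f g : Q.domain, ⟪Q f, (g : E)⟫ = ⟪(f : E), Q g⟫)
    (hQpos : ∀ f : Q.domain, 0 ≤ (⟪(f : E), Q f⟫).re)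
    (hQdom : ∀ f : E, f ∈ Q.domain ↔ ∃ s : ℕ → A.domain,
      Tendsto (fun n => ((s n : E))) atTop (𝓝 f) ∧
      ∀ δ : ℝ, 0 < δ → ∃ N, ∀ n ≥ N, ∀ m ≥ N,
        (⟪((s n - s m : A.domain) : E), A (s n - s m)⟫).im < δ)
    (hQval : ∀ (f : Q.domain) (s : ℕ → A.domain),
      Tendsto (fun n => ((s n : E))) atTop (𝓝 (f : E)) →
      (∀ δ : ℝ, 0 < δ → ∃ N, ∀ n ≥ N, ∀ m ≥ N,
        (⟪((s n - s m : A.domain) : E), A (s n - s m)⟫).im < δ) →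
      Tendsto (fun n => (⟪((s n : E)), A (s n)⟫).im) atTop (𝓝 (‖Q f‖ ^ 2)))
    (R : E →L[ℂ] E)
    (hRQ : ∀ f : Q.domain, R (Q f) = (f : E))
    (hQsurj : ∀ g : E, ∃ f : Q.domain, Q f = g)
    (B : E →ₗ.[ℂ] E) (hAB : A ≤ B)
    (𝒱 : Submodule ℂ E) (h𝒱B : 𝒱 ≤ B.domain)
    (hdisj : A.domain ⊓ 𝒱 = ⊥) (hsum : A.domain ⊔ 𝒱 = B.domain)
    (hcond : ∀ (v : E) (hv : v ∈ 𝒱), ∃ w : E,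
      (∀ (g : E) (hg : R g ∈ A.domain), ⟪v, A ⟨R g, hg⟩⟫ = ⟪w, g⟫) ∧
      (1 / 4 : ℝ) * ‖R (B ⟨v, h𝒱B hv⟩) - w‖ ^ 2 ≤ (⟪v, B ⟨v, h𝒱B hv⟩⟫).im) :
    ∀ f : B.domain, 0 ≤ (⟪(f : E), B f⟫).im := by

  intro f
  have hf : (f : E) ∈ A.domain ⊔ 𝒱 := by rw [hsum]; exact f.2
  obtain ⟨u, hu, v, hv, huv⟩ := Submodule.mem_sup.mp hf
  -- constant sequence Cauchy condition
  set s : ℕ → A.domain := fun _ => ⟨u, hu⟩ with hs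
  have hcau : ∀ δ : ℝ, 0 < δ → ∃ N, ∀ n ≥ N, ∀ m ≥ N,
      (⟪((s n - s m : A.domain) : E), A (s n - s m)⟫).im < δ := by
    intro δ hδ
    refine ⟨0, fun n _ m _ => ?_⟩
    simp [hs, hδ]
  have huQ : u ∈ Q.domain :=
    (hQdom u).mpr ⟨s, tendsto_const_nhds, hcau⟩
  set a : E := Q ⟨u, huQ⟩ with ha
  have hQa : ‖a‖ ^ 2 = (⟪u, A ⟨u, hu⟩⟫).im := by
    have h1 := hQval ⟨u, huQ⟩ s tendsto_const_nhds hcau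
    have h2 : Tendsto (fun n : ℕ => (⟪((s n : E)), A (s n)⟫).im) atTop
        (𝓝 ((⟪u, A ⟨u, hu⟩⟫).im)) := by
      simp only [hs]
      exact tendsto_const_nhds
    rw [ha]
    exact tendsto_nhds_unique h1 h2
  have hRa : R a = u := hRQ ⟨u, huQ⟩
  have hRsym : ∀ x y : E, ⟪R x, y⟫ = ⟪x, R y⟫ := by
    intro x y
    obtain ⟨fx, hfx⟩ := hQsurj x
    obtain ⟨fy, hfy⟩ := hQsurj y
    rw [← hfx, ← hfy, hRQ, hRQ, hQsym]
  obtain ⟨w, hw1, hw2⟩ := hcond v hv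
  set vB : B.domain := ⟨v, h𝒱B hv⟩ with hvB
  set uB : B.domain := ⟨u, hAB.1 hu⟩ with huB
  have hfB : f = uB + vB := by
    apply Subtype.ext
    simp [huB, hvB, huv]
  have hBu : B uB = A ⟨u, hu⟩ := (hAB.2 rfl).symm
  -- W* identity
  have hga : R a ∈ A.domain := by rw [hRa]; exact hu
  have hWs : ⟪v, A ⟨u, hu⟩⟫ = ⟪w, a⟫ := by
    have := hw1 a hga
    rwa [show (⟨R a, hga⟩ : A.domain) = ⟨u, hu⟩ from Subtype.ext hRa] at this
  have hub : ⟪u, (B vB : E)⟫ = ⟪a, R (B vB)⟫ := by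
    rw [← hRa, hRsym]
  set d : E := R (B vB) - w with hd
  have hexp : (⟪(f : E), B f⟫).im
      = ‖a‖ ^ 2 + (⟪a, d⟫).im + (⟪v, B vB⟫).im := by
    rw [hfB, B.map_add uB vB]
    have hco : ((uB + vB : B.domain) : E) = u + v := by simp [huB, hvB]
    rw [hco, inner_add_left, inner_add_right, inner_add_right, hBu]
    have h1 : (⟪v, A ⟨u, hu⟩⟫).im = -(⟪a, w⟫).im := by
      rw [hWs, ← inner_conj_symm w a, Complex.conj_im]
    rw [hd, inner_sub_right]
    simp only [Complex.add_im, Complex.sub_im]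
    rw [hQa.symm, hub, h1]
    ring
  rw [hexp]
  have hbound : |(⟪a, d⟫).im| ≤ ‖a‖ * ‖d‖ :=
    (Complex.abs_im_le_norm _).trans (by exact norm_inner_le_norm a d)
  have h2 : (1 / 4 : ℝ) * ‖d‖ ^ 2 ≤ (⟪v, B vB⟫).im := hw2
  have h3 : -(‖a‖ * ‖d‖) ≤ (⟪a, d⟫).im := neg_le_of_abs_le hbound
  nlinarith [sq_nonneg (‖a‖ - ‖d‖ / 2)]
end

section
/- Main theorem (necessity direction): With A, V_A, W_A as above, if B ⊇ A is a dissipative extension with D(B) = D(A) ∔ 𝒱, then every v ∈ 𝒱 belongs to D(W_A*) and satisfies Im⟨v, Bv⟩ ≥ (1/4)‖(V_A^{-1/2} B - W_A*) v‖². -/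
open Filter Topology

local notation "⟪" x ", " y "⟫" => @inner ℂ _ _ x y

/-- **Main theorem, necessity direction.**
Let `A` be a dissipative operator on a complex Hilbert space `E` whose form
`q_A(f) = Im ⟪f, A f⟫` is closable with `q_A(f) ≥ ε ‖f‖²` for some `ε > 0`, let
`Q = V_A^{1/2}` be the square root of the selfadjoint operator `V_A` associated with the
closure of `q_A` (encoded as in the hypotheses `hQsym, hQpos, hQdom, hQval`), and let
`R = V_A^{-1/2}` be its bounded inverse.  The operator `W_A` has domain
`ran (V_A^{1/2} ↾ D(A)) = {g : R g ∈ D(A)}` and acts by `W_A g = A V_A^{-1/2} g`.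
If `B ⊇ A` is a dissipative extension with `D(B) = D(A) ∔ 𝒱`, then every `v ∈ 𝒱` belongs
to `D(W_A^*)` — i.e. there is `w = W_A^* v` with `⟪v, A (R g)⟫ = ⟪w, g⟫` whenever
`R g ∈ D(A)` — and satisfies `Im ⟪v, B v⟫ ≥ (1/4) ‖(V_A^{-1/2} B - W_A^*) v‖²`. -/
theorem stmt_6 {E : Type*} [NormedAddCommGroup E] [InnerProductSpace ℂ E] [CompleteSpace E]
    (A : E →ₗ.[ℂ] E) (hdense : Dense (A.domain : Set E))
    (hdiss : ∀ f : A.domain, 0 ≤ (⟪(f : E), A f⟫).im)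
    (ε : ℝ) (hε : 0 < ε)
    (hpos : ∀ f : A.domain, ε * ‖(f : E)‖ ^ 2 ≤ (⟪(f : E), A f⟫).im)
    (Q : E →ₗ.[ℂ] E)
    (hQsym : ∀ f g : Q.domain, ⟪Q f, (g : E)⟫ = ⟪(f : E), Q g⟫)
    (hQpos : ∀ f : Q.domain, 0 ≤ (⟪(f : E), Q f⟫).re)
    (hQdom : ∀ f : E, f ∈ Q.domain ↔ ∃ s : ℕ → A.domain,
      Tendsto (fun n => ((s n : E))) atTop (𝓝 f) ∧
      ∀ δ : ℝ, 0 < δ → ∃ N, ∀ n ≥ N, ∀ m ≥ N,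
        (⟪((s n - s m : A.domain) : E), A (s n - s m)⟫).im < δ)
    (hQval : ∀ (f : Q.domain) (s : ℕ → A.domain),
      Tendsto (fun n => ((s n : E))) atTop (𝓝 (f : E)) →
      (∀ δ : ℝ, 0 < δ → ∃ N, ∀ n ≥ N, ∀ m ≥ N,
        (⟪((s n - s m : A.domain) : E), A (s n - s m)⟫).im < δ) →
      Tendsto (fun n => (⟪((s n : E)), A (s n)⟫).im) atTop (𝓝 (‖Q f‖ ^ 2)))
    (R : E →L[ℂ] E)
    (hRQ : ∀ f : Q.domain, R (Q f) = (f : E))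
    (hQsurj : ∀ g : E, ∃ f : Q.domain, Q f = g)
    (B : E →ₗ.[ℂ] E) (hAB : A ≤ B)
    (hBdiss : ∀ f : B.domain, 0 ≤ (⟪(f : E), B f⟫).im)
    (𝒱 : Submodule ℂ E) (h𝒱B : 𝒱 ≤ B.domain)
    (hdisj : A.domain ⊓ 𝒱 = ⊥) (hsum : A.domain ⊔ 𝒱 = B.domain) :
    ∀ (v : E) (hv : v ∈ 𝒱), ∃ w : E,
      (∀ (g : E) (hg : R g ∈ A.domain), ⟪v, A ⟨R g, hg⟩⟫ = ⟪w, g⟫) ∧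
      (1 / 4 : ℝ) * ‖R (B ⟨v, h𝒱B hv⟩) - w‖ ^ 2 ≤ (⟪v, B ⟨v, h𝒱B hv⟩⟫).im := by
  intro v hv
  set v' : B.domain := ⟨v, h𝒱B hv⟩ with hv'
  set β : ℝ := (⟪v, B v'⟫).im with hβdef
  have hβ : 0 ≤ β := hBdiss v'
  -- R is selfadjoint
  have hRsa : ∀ x y : E, ⟪R x, y⟫ = ⟪x, R y⟫ := by
    intro x y
    obtain ⟨f, hf⟩ := hQsurj x
    obtain ⟨f', hf'⟩ := hQsurj y
    rw [← hf, ← hf', hRQ, hRQ, hQsym]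
  -- norm identity : Im ⟪R g, A (R g)⟫ = ‖g‖²
  have hnorm : ∀ (g : E) (hg : R g ∈ A.domain),
      (⟪R g, A ⟨R g, hg⟩⟫).im = ‖g‖ ^ 2 := by
    intro g hg
    obtain ⟨f, hf⟩ := hQsurj g
    have hRg : R g = (f : E) := by rw [← hf, hRQ]
    have h1 : Tendsto (fun _ : ℕ => ((⟨R g, hg⟩ : A.domain) : E)) atTop (𝓝 (f : E)) := by
      simp only [hRg]
      exact tendsto_const_nhds
    have h2 : ∀ δ : ℝ, 0 < δ → ∃ N, ∀ n ≥ N, ∀ m ≥ N,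
        (⟪(((fun _ : ℕ => (⟨R g, hg⟩ : A.domain)) n - (fun _ => ⟨R g, hg⟩) m : A.domain) : E),
          A ((fun _ => ⟨R g, hg⟩) n - (fun _ => ⟨R g, hg⟩) m)⟫).im < δ := by
      intro δ hδ
      exact ⟨0, fun n _ m _ => by simp [hδ]⟩
    have := hQval f (fun _ => ⟨R g, hg⟩) h1 h2
    have heq := tendsto_nhds_unique tendsto_const_nhds this
    rw [heq, hf]
  -- the key quadratic estimate
  have hL : ∀ (g : E) (hg : R g ∈ A.domain),
      Complex.normSq (⟪v, A ⟨R g, hg⟩⟫ - (starRingEnd ℂ) ⟪R g, B v'⟫) ≤ 4 * β * ‖g‖ ^ 2 := by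
    intro g hg
    set d : ℂ := ⟪v, A ⟨R g, hg⟩⟫ with hd
    set b : ℂ := ⟪R g, B v'⟫ with hb
    set L : ℂ := d - (starRingEnd ℂ) b with hLdef
    set m : ℝ := Complex.normSq L with hm
    have hm0 : 0 ≤ m := Complex.normSq_nonneg L
    have he : (⟪v, B v'⟫).im = β := rfl
    -- dissipativity of B on R g + c • v with c = I t L
    have hquad : ∀ t : ℝ, 0 ≤ t →
        0 ≤ ‖g‖ ^ 2 - t * m + t ^ 2 * m * β := by
      intro t ht
      set c : ℂ := Complex.I * (t : ℂ) * L with hc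
      set fB : B.domain := ⟨R g, hAB.1 hg⟩ with hfB
      have hBfB : B fB = A ⟨R g, hg⟩ := (hAB.2 rfl).symm
      set F : B.domain := fB + c • v' with hF
      have hFval : (F : E) = R g + c • v := rfl
      have hBF : B F = A ⟨R g, hg⟩ + c • B v' := by
        rw [hF, B.map_add, B.map_smul, hBfB]
      have hdissF := hBdiss F
      have hexp : ⟪(F : E), B F⟫
          = ⟪R g, A ⟨R g, hg⟩⟫ + c * b + (starRingEnd ℂ) c * d
            + (starRingEnd ℂ) c * c * ⟪v, B v'⟫ := by
        rw [hFval, hBF]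
        simp only [inner_add_left, inner_add_right, inner_smul_left, inner_smul_right,
          hb, hd, hv']
        ring
      have him : (⟪(F : E), B F⟫).im = ‖g‖ ^ 2 - t * m + t ^ 2 * m * β := by
        rw [hexp]
        have ha := hnorm g hg
        rw [← he, ← ha]
        simp only [hc, hm, hLdef, Complex.normSq_apply, Complex.add_im, Complex.mul_im,
          Complex.mul_re, Complex.I_re, Complex.I_im, Complex.ofReal_re, Complex.ofReal_im,
          Complex.sub_re, Complex.sub_im, map_mul, map_sub, Complex.conj_I, Complex.conj_re,
          Complex.conj_im, Complex.neg_re, Complex.neg_im]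
        ring
      rw [← him]
      exact hdissF
    -- extend to all t and apply the discriminant bound
    have hquad' : ∀ t : ℝ, 0 ≤ (m * β) * (t * t) + (-m) * t + ‖g‖ ^ 2 := by
      intro t
      rcases le_or_gt 0 t with ht | ht
      · have := hquad t ht
        nlinarith
      · have h1 : 0 ≤ (m * β) * (t * t) := mul_nonneg (mul_nonneg hm0 hβ) (mul_self_nonneg t)
        have h2 : 0 ≤ (-m) * t := by nlinarith
        have h3 : (0:ℝ) ≤ ‖g‖ ^ 2 := by positivity
        linarith
    have hdisc := discrim_le_zero hquad'
    rw [discrim] at hdisc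
    rcases eq_or_lt_of_le hm0 with hm' | hm'
    · rw [← hm']
      positivity
    · nlinarith
  -- build the functional and apply Hahn-Banach + Riesz
  set M : Submodule ℂ E := A.domain.comap (R : E →ₗ[ℂ] E) with hM
  have hMmem : ∀ g : M, R (g : E) ∈ A.domain := fun g => g.2
  let ρ : M →ₗ[ℂ] A.domain :=
    LinearMap.codRestrict A.domain ((R : E →ₗ[ℂ] E).comp M.subtype) hMmem
  let φ : M →ₗ[ℂ] ℂ :=
    ((innerSL ℂ v).toLinearMap.comp (A.toFun.comp ρ)) -
      ((innerSL ℂ (R (B v'))).toLinearMap.comp M.subtype)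
  have hφ : ∀ g : M, φ g = ⟪v, A ⟨R (g : E), g.2⟩⟫ - ⟪R (B v'), (g : E)⟫ := fun g => rfl
  have hφbound : ∀ g : M, ‖φ g‖ ≤ (2 * Real.sqrt β) * ‖(g : E)‖ := by
    intro g
    have h1 := hL (g : E) g.2
    have h2 : (starRingEnd ℂ) ⟪R (g : E), B v'⟫ = ⟪R (B v'), (g : E)⟫ := by
      rw [inner_conj_symm, ← hRsa]
    rw [h2] at h1
    have h3 : ‖φ g‖ = Real.sqrt (Complex.normSq (φ g)) := by
      rw [hφ g, Complex.norm_def]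
    rw [hφ g] at h3 ⊢
    rw [h3]
    have h4 : Real.sqrt (Complex.normSq (⟪v, A ⟨R (g : E), g.2⟩⟫ - ⟪R (B v'), (g : E)⟫))
        ≤ Real.sqrt (4 * β * ‖(g : E)‖ ^ 2) := Real.sqrt_le_sqrt h1
    refine h4.trans (le_of_eq ?_)
    rw [show (4 * β * ‖(g : E)‖ ^ 2) = (2 * Real.sqrt β * ‖(g : E)‖) ^ 2 by
      rw [mul_pow, mul_pow, Real.sq_sqrt hβ]; ring]
    exact Real.sqrt_sq (by positivity)
  let φ' : M →L[ℂ] ℂ := φ.mkContinuous (2 * Real.sqrt β) hφbound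
  obtain ⟨Φ, hΦext, hΦnorm⟩ := exists_extension_norm_eq M φ'
  set z : E := (InnerProductSpace.toDual ℂ E).symm Φ with hz
  have hzval : ∀ g : E, ⟪z, g⟫ = Φ g := by
    intro g
    rw [hz]
    exact InnerProductSpace.toDual_symm_apply
  have hznorm : ‖z‖ ≤ 2 * Real.sqrt β := by
    rw [hz, LinearIsometryEquiv.norm_map, hΦnorm]
    exact φ.mkContinuous_norm_le (by positivity) hφbound
  refine ⟨z + R (B v'), ?_, ?_⟩
  · intro g hg
    have hgM : g ∈ M := by
      rw [hM, Submodule.mem_comap]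
      exact hg
    have hΦg : Φ g = φ ⟨g, hgM⟩ := by
      have := hΦext ⟨g, hgM⟩
      rw [this]
      rfl
    rw [inner_add_left, hzval, hΦg, hφ ⟨g, hgM⟩]
    ring
  · have hdiff : R (B v') - (z + R (B v')) = -z := by abel
    rw [hdiff, norm_neg]
    have h4 : ‖z‖ ^ 2 ≤ 4 * β := by
      nlinarith [Real.sq_sqrt hβ, norm_nonneg z, Real.sqrt_nonneg β]
    linarith
end

section
/- Let S be a strictly positive symmetric operator with Friedrichs extension S_F and Kreĭn–von Neumann extension S_K. Then D(S_K^{1/2}) = D(S_F^{1/2}) ∔ ker(S*) (direct sum), and for every f ∈ D(S_F^{1/2}) and v ∈ ker(S*): ‖S_K^{1/2}(f+v)‖² = ‖S_F^{1/2} f‖². -/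
open Filter Topology

local notation "⟪" x ", " y "⟫" => @inner ℂ _ _ x y

/-- The kernel of the adjoint `S*` of a densely defined operator `S`, described without
reference to the adjoint as `{v : ∀ f ∈ D(S), ⟪v, S f⟫ = 0}` (which says precisely that
`v ∈ D(S*)` and `S* v = 0`). -/
def kerAdjoint {E : Type*} [NormedAddCommGroup E] [InnerProductSpace ℂ E]
    (S : E →ₗ.[ℂ] E) : Submodule ℂ E where
  carrier := {v | ∀ f : S.domain, ⟪v, S f⟫ = (0 : ℂ)}
  add_mem' := by
    intro a b ha hb f
    simp [inner_add_left, ha f, hb f]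
  zero_mem' := by
    intro f
    simp
  smul_mem' := by
    intro c v hv f
    simp [inner_smul_left, hv f]

open ComplexConjugate

lemma aux_adjoint_isClosed {E : Type*} [NormedAddCommGroup E] [InnerProductSpace ℂ E]
    [CompleteSpace E] (S : E →ₗ.[ℂ] E) (hdense : Dense (S.domain : Set E)) :
    S.adjoint.IsClosed := by
  apply IsSeqClosed.isClosed
  intro p q hp hq
  have h1 : Tendsto (fun n => (p n).1) atTop (𝓝 q.1) := (continuous_fst.tendsto q).comp hq
  have h2 : Tendsto (fun n => (p n).2) atTop (𝓝 q.2) := (continuous_snd.tendsto q).comp hq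
  have key : ∀ s : S.domain, ⟪q.2, (s : E)⟫ = ⟪q.1, S s⟫ := by
    intro s
    have hn : ∀ n, ⟪(p n).2, (s : E)⟫ = ⟪(p n).1, S s⟫ := by
      intro n
      obtain ⟨a, ha1, ha2⟩ := (S.adjoint.mem_graph_iff).1 (hp n)
      rw [← ha1, ← ha2]
      exact LinearPMap.adjoint_isFormalAdjoint hdense a s
    have t1 : Tendsto (fun n => ⟪(p n).2, (s : E)⟫) atTop (𝓝 ⟪q.2, (s : E)⟫) :=
      h2.inner tendsto_const_nhds
    have t2 : Tendsto (fun n => ⟪(p n).1, S s⟫) atTop (𝓝 ⟪q.1, S s⟫) :=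
      h1.inner tendsto_const_nhds
    exact tendsto_nhds_unique (t1.congr fun n => hn n) t2
  have hmem : q.1 ∈ S.adjoint.domain :=
    LinearPMap.mem_adjoint_domain_of_exists _ ⟨q.2, fun x => key x⟩
  refine (S.adjoint.mem_graph_iff).2 ⟨⟨q.1, hmem⟩, rfl, ?_⟩
  exact LinearPMap.adjoint_apply_eq hdense _ fun x => key x

lemma aux_closable {E : Type*} [NormedAddCommGroup E] [InnerProductSpace ℂ E]
    [CompleteSpace E] (S : E →ₗ.[ℂ] E) (hdense : Dense (S.domain : Set E))
    (hsym : ∀ f g : S.domain, ⟪S f, (g : E)⟫ = ⟪(f : E), S g⟫) :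
    S.IsClosable :=
  (aux_adjoint_isClosed S hdense).isClosable.leIsClosable
    (LinearPMap.IsFormalAdjoint.le_adjoint hdense hsym)

lemma aux_degCS {E : Type*} [NormedAddCommGroup E] [InnerProductSpace ℂ E]
    (QK : E →ₗ.[ℂ] E)
    (hQKsym : ∀ f g : QK.domain, ⟪QK f, (g : E)⟫ = ⟪(f : E), QK g⟫)
    (hQKpos : ∀ f : QK.domain, 0 ≤ (⟪(f : E), QK f⟫).re)
    (x : QK.domain) (hx : ⟪(x : E), QK x⟫ = 0) (y : QK.domain) :
    ⟪(y : E), QK x⟫ = 0 := by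
  set b : ℂ := ⟪(y : E), QK x⟫ with hb
  by_contra hb0
  have hherm : ⟪(x : E), QK y⟫ = conj b := by
    rw [hb, ← hQKsym x y, ← inner_conj_symm]
  have key : ∀ t : ℝ, 0 ≤ (⟪(y : E), QK y⟫).re - 2 * t * ‖b‖ ^ 2 := by
    intro t
    set c : ℂ := -(t : ℂ) * conj b with hc
    have h := hQKpos (y + c • x)
    have hco : ((y + c • x : QK.domain) : E) = (y : E) + c • (x : E) := rfl
    have hQ : QK (y + c • x) = QK y + c • QK x := by
      rw [QK.map_add, QK.map_smul]
    rw [hco, hQ] at h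
    have hexp : ⟪(y : E) + c • (x : E), QK y + c • QK x⟫
        = ⟪(y : E), QK y⟫ + ((-(2 * t * ‖b‖ ^ 2) : ℝ) : ℂ) := by
      have e1 : ⟪(y : E) + c • (x : E), QK y + c • QK x⟫
          = ⟪(y : E), QK y⟫ + c * ⟪(y : E), QK x⟫ + conj c * ⟪(x : E), QK y⟫
            + conj c * c * ⟪(x : E), QK x⟫ := by
        simp only [inner_add_left, inner_add_right, inner_smul_left, inner_smul_right]
        ring
      rw [e1, hx, ← hb, hherm, mul_zero, add_zero, add_assoc]
      congr 1
      rw [hc]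
      simp only [map_mul, map_neg, Complex.conj_conj, Complex.conj_ofReal]
      rw [mul_assoc, mul_comm (conj b) b, Complex.mul_conj', mul_assoc, Complex.mul_conj']
      push_cast
      ring
    rw [hexp, Complex.add_re, Complex.ofReal_re] at h
    linarith
  have hbpos : (0 : ℝ) < ‖b‖ ^ 2 := pow_pos (norm_pos_iff.mpr hb0) 2
  set a : ℝ := (⟪(y : E), QK y⟫).re with ha
  have h := key ((a + 1) / (2 * ‖b‖ ^ 2))
  have h3 : 2 * ((a + 1) / (2 * ‖b‖ ^ 2)) * ‖b‖ ^ 2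
      = ((a + 1) / (2 * ‖b‖ ^ 2)) * (2 * ‖b‖ ^ 2) := by ring
  rw [h3, div_mul_cancel₀ _ (ne_of_gt (by nlinarith : (0:ℝ) < 2 * ‖b‖ ^ 2))] at h
  linarith

lemma aux_sq_lt {x δ : ℝ} (hx : 0 ≤ x) (hδ : 0 < δ) (h : x ^ 2 < δ ^ 2) : x < δ := by
  nlinarith

lemma aux_lt_sq {x δ : ℝ} (hx : 0 ≤ x) (h : x < δ) : x ^ 2 < δ ^ 2 := by nlinarith

/-- The square root `QK` restricted to a submodule of its domain, as a linear map. -/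
def auxKappa {E : Type*} [NormedAddCommGroup E] [InnerProductSpace ℂ E]
    (QK : E →ₗ.[ℂ] E) {D : Submodule ℂ E} (h : ∀ s : D, (s : E) ∈ QK.domain) :
    D →ₗ[ℂ] E where
  toFun := fun s => QK ⟨(s : E), h s⟩
  map_add' := by
    intro a b
    show QK ⟨((a + b : D) : E), h (a + b)⟩ = QK ⟨(a : E), h a⟩ + QK ⟨(b : E), h b⟩
    have heq : (⟨((a + b : D) : E), h (a + b)⟩ : QK.domain)
        = ⟨(a : E), h a⟩ + ⟨(b : E), h b⟩ := rfl
    rw [heq, QK.map_add]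
  map_smul' := by
    intro c a
    show QK ⟨((c • a : D) : E), h (c • a)⟩ = c • QK ⟨(a : E), h a⟩
    have heq : (⟨((c • a : D) : E), h (c • a)⟩ : QK.domain)
        = c • (⟨(a : E), h a⟩ : QK.domain) := rfl
    rw [heq, QK.map_smul]

@[simp] lemma auxKappa_apply {E : Type*} [NormedAddCommGroup E] [InnerProductSpace ℂ E]
    (QK : E →ₗ.[ℂ] E) {D : Submodule ℂ E} (h : ∀ s : D, (s : E) ∈ QK.domain) (s : D) :
    auxKappa QK h s = QK ⟨(s : E), h s⟩ := rfl

/-- **Form domain of the Kreĭn–von Neumann extension.**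
Let `S` be a strictly positive symmetric operator with Friedrichs extension `S_F` and
Kreĭn–von Neumann extension `S_K = S* ↾ (D(S̄) ∔ ker S*)`.  Here `QF = S_F^{1/2}` is encoded
as the symmetric nonnegative operator whose domain is the closure of the form
`f ↦ Re ⟪f, S f⟫` with `‖QF f‖²` equal to the closed form (hypotheses `hQFdom, hQFval`),
`SK` is the restriction of `S*` to `D(S.closure) ⊔ ker S*`, and `QK = S_K^{1/2}` is its
positive square root (`hQKsq`, `hQKsqval`).  Then
`D(S_K^{1/2}) = D(S_F^{1/2}) ∔ ker S*` and
`‖S_K^{1/2} (f + v)‖² = ‖S_F^{1/2} f‖²` for all `f ∈ D(S_F^{1/2})`, `v ∈ ker S*`. -/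
theorem stmt_10 {E : Type*} [NormedAddCommGroup E] [InnerProductSpace ℂ E] [CompleteSpace E]
    (S : E →ₗ.[ℂ] E) (hdense : Dense (S.domain : Set E))
    (hsym : ∀ f g : S.domain, ⟪S f, (g : E)⟫ = ⟪(f : E), S g⟫)
    (ε : ℝ) (hε : 0 < ε)
    (hpos : ∀ f : S.domain, ε * ‖(f : E)‖ ^ 2 ≤ (⟪(f : E), S f⟫).re)
    -- `QF = S_F^{1/2}`:
    (QF : E →ₗ.[ℂ] E)
    (hQFsym : ∀ f g : QF.domain, ⟪QF f, (g : E)⟫ = ⟪(f : E), QF g⟫)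
    (hQFpos : ∀ f : QF.domain, 0 ≤ (⟪(f : E), QF f⟫).re)
    (hQFdom : ∀ f : E, f ∈ QF.domain ↔ ∃ s : ℕ → S.domain,
      Tendsto (fun n => ((s n : E))) atTop (𝓝 f) ∧
      ∀ δ : ℝ, 0 < δ → ∃ N, ∀ n ≥ N, ∀ m ≥ N,
        (⟪((s n - s m : S.domain) : E), S (s n - s m)⟫).re < δ)
    (hQFval : ∀ (f : QF.domain) (s : ℕ → S.domain),
      Tendsto (fun n => ((s n : E))) atTop (𝓝 (f : E)) →
      (∀ δ : ℝ, 0 < δ → ∃ N, ∀ n ≥ N, ∀ m ≥ N,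
        (⟪((s n - s m : S.domain) : E), S (s n - s m)⟫).re < δ) →
      Tendsto (fun n => (⟪((s n : E)), S (s n)⟫).re) atTop (𝓝 (‖QF f‖ ^ 2)))
    -- `SK`, the Kreĭn–von Neumann extension:
    (SK : E →ₗ.[ℂ] E) (hSKle : SK ≤ S.adjoint)
    (hSKdom : SK.domain = S.closure.domain ⊔ kerAdjoint S)
    -- `QK = S_K^{1/2}`, the positive square root of `SK`:
    (QK : E →ₗ.[ℂ] E)
    (hQKsym : ∀ f g : QK.domain, ⟪QK f, (g : E)⟫ = ⟪(f : E), QK g⟫)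
    (hQKpos : ∀ f : QK.domain, 0 ≤ (⟪(f : E), QK f⟫).re)
    (hQKsq : ∀ f : E, f ∈ SK.domain ↔ ∃ hf : f ∈ QK.domain, QK ⟨f, hf⟩ ∈ QK.domain)
    (hQKsqval : ∀ (f : E) (hf : f ∈ QK.domain) (hf2 : QK ⟨f, hf⟩ ∈ QK.domain)
      (hfS : f ∈ SK.domain), SK ⟨f, hfS⟩ = QK ⟨QK ⟨f, hf⟩, hf2⟩) :
    (∀ f : E, f ∈ QK.domain ↔
        ∃ g ∈ QF.domain, ∃ v ∈ kerAdjoint S, f = g + v) ∧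
      QF.domain ⊓ kerAdjoint S = ⊥ ∧
      ∀ (g : E) (hg : g ∈ QF.domain) (v : E) (hv : v ∈ kerAdjoint S)
        (hgv : g + v ∈ QK.domain),
        ‖QK ⟨g + v, hgv⟩‖ ^ 2 = ‖QF ⟨g, hg⟩‖ ^ 2 := by
  classical
  have hclosable : S.IsClosable := aux_closable S hdense hsym
  have hclosdom : S.closure.domain ≤ SK.domain := by rw [hSKdom]; exact le_sup_left
  have hKdom : kerAdjoint S ≤ SK.domain := by rw [hSKdom]; exact le_sup_right
  have hSdom : S.domain ≤ SK.domain := fun x hx => hclosdom (S.le_closure.1 hx)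
  have hSKQK : ∀ {x : E}, x ∈ SK.domain → x ∈ QK.domain := fun {x} hx => ((hQKsq x).1 hx).choose
  have hQK2 : ∀ {p : E} (hp : p ∈ SK.domain), QK ⟨p, hSKQK hp⟩ ∈ QK.domain :=
    fun {p} hp => ((hQKsq p).1 hp).choose_spec
  have hSKadj : ∀ (u : SK.domain) (s : S.domain), ⟪SK u, (s : E)⟫ = ⟪(u : E), S s⟫ := by
    intro u s
    have h1 : SK u = S.adjoint ⟨(u : E), hSKle.1 u.2⟩ := hSKle.2 rfl
    rw [h1]
    exact LinearPMap.adjoint_isFormalAdjoint hdense ⟨(u : E), hSKle.1 u.2⟩ s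
  have hre : ∀ x : E, (⟪x, x⟫).re = ‖x‖ ^ 2 := by
    intro x
    have h := inner_self_eq_norm_sq (𝕜 := ℂ) x
    rwa [RCLike.re_to_complex] at h
  have hSKs : ∀ (s : S.domain) (h : (s : E) ∈ SK.domain), SK ⟨(s : E), h⟩ = S s := by
    intro s h
    apply hdense.eq_of_inner_left ℂ
    intro v hv
    lift v to S.domain using hv
    rw [hSKadj ⟨(s : E), h⟩ v]
    exact (hsym s v).symm
  have hSKv : ∀ (v : E) (hv : v ∈ kerAdjoint S), SK ⟨v, hKdom hv⟩ = 0 := by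
    intro v hv
    apply hdense.eq_of_inner_left ℂ
    intro u hu
    lift u to S.domain using hu
    rw [hSKadj ⟨v, hKdom hv⟩ u, inner_zero_left]
    exact hv u
  have hQKsqval' : ∀ (p : E) (hp : p ∈ SK.domain) (h2 : QK ⟨p, hSKQK hp⟩ ∈ QK.domain),
      QK ⟨QK ⟨p, hSKQK hp⟩, h2⟩ = SK ⟨p, hp⟩ :=
    fun p hp h2 => (hQKsqval p (hSKQK hp) h2 hp).symm
  have hpair : ∀ (p q : E) (hp : p ∈ SK.domain) (hq : q ∈ SK.domain),
      ⟪QK ⟨p, hSKQK hp⟩, QK ⟨q, hSKQK hq⟩⟫ = ⟪p, SK ⟨q, hq⟩⟫ := by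
    intro p q hp hq
    have h := hQKsym ⟨p, hSKQK hp⟩ ⟨QK ⟨q, hSKQK hq⟩, hQK2 hq⟩
    rw [hQKsqval' q hq (hQK2 hq)] at h
    exact h
  have hQKv : ∀ (v : E) (hv : v ∈ kerAdjoint S), QK ⟨v, hSKQK (hKdom hv)⟩ = 0 := by
    intro v hv
    have h := hpair v v (hKdom hv) (hKdom hv)
    rw [hSKv v hv, inner_zero_right] at h
    exact inner_self_eq_zero.1 h
  have hkerQK : ∀ (v : E), v ∈ kerAdjoint S → ∀ x : QK.domain, ⟪v, QK x⟫ = 0 := by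
    intro v hv x
    rw [← hQKsym ⟨v, hSKQK (hKdom hv)⟩ x, hQKv v hv, inner_zero_left]
  have hmemQ : ∀ s : S.domain, (s : E) ∈ QK.domain := fun s => hSKQK (hSdom s.2)
  set κ : S.domain →ₗ[ℂ] E := auxKappa QK hmemQ with hκdef
  have hκ : ∀ s t : S.domain, ⟪κ s, κ t⟫ = ⟪(s : E), S t⟫ := by
    intro s t
    have h := hpair s t (hSdom s.2) (hSdom t.2)
    rw [hSKs t (hSdom t.2)] at h
    exact h
  have hnormκ : ∀ s : S.domain, ‖κ s‖ ^ 2 = (⟪(s : E), S s⟫).re := by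
    intro s
    rw [← hre (κ s), hκ s s]
  have hκsub : ∀ s t : S.domain, κ s - κ t = κ (s - t) := fun s t => (map_sub κ s t).symm
  have hlowκ : ∀ x : S.domain, ε * ‖(x : E)‖ ^ 2 ≤ ‖κ x‖ ^ 2 := by
    intro x
    rw [hnormκ x]
    exact hpos x
  set M₀ : Submodule ℂ E := LinearMap.range κ with hM₀
  set M : Submodule ℂ E := M₀.topologicalClosure with hM
  have hMclosed : IsClosed (M : Set E) := M₀.isClosed_topologicalClosure
  have hMc : (M : Set E) = closure (M₀ : Set E) := M₀.topologicalClosure_coe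
  have hκM : ∀ s : S.domain, κ s ∈ M := fun s => M₀.le_topologicalClosure ⟨s, rfl⟩
  -- Cauchy transfer lemmas
  have hCauchy1 : ∀ s : ℕ → S.domain,
      (∀ δ : ℝ, 0 < δ → ∃ N, ∀ n ≥ N, ∀ m ≥ N,
        (⟪((s n - s m : S.domain) : E), S (s n - s m)⟫).re < δ) →
      CauchySeq (fun n => κ (s n)) := by
    intro s h
    rw [Metric.cauchySeq_iff]
    intro δ hδ
    obtain ⟨N, hN⟩ := h (δ ^ 2) (by positivity)
    refine ⟨N, fun m hm n hn => ?_⟩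
    have h1 := hN m hm n hn
    rw [← hnormκ (s m - s n), ← hκsub] at h1
    rw [dist_eq_norm]
    exact aux_sq_lt (norm_nonneg _) hδ h1
  have hCauchy2 : ∀ s : ℕ → S.domain, CauchySeq (fun n => κ (s n)) →
      ∀ δ : ℝ, 0 < δ → ∃ N, ∀ n ≥ N, ∀ m ≥ N,
        (⟪((s n - s m : S.domain) : E), S (s n - s m)⟫).re < δ := by
    intro s h δ hδ
    rw [Metric.cauchySeq_iff] at h
    obtain ⟨N, hN⟩ := h (Real.sqrt δ) (Real.sqrt_pos.2 hδ)
    refine ⟨N, fun n hn m hm => ?_⟩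
    have h1 := hN n hn m hm
    rw [dist_eq_norm, hκsub] at h1
    rw [← hnormκ (s n - s m)]
    have h2 := aux_lt_sq (norm_nonneg _) h1
    rwa [Real.sq_sqrt hδ.le] at h2
  have hCauchyT : ∀ t : ℕ → S.domain, CauchySeq (fun n => κ (t n)) →
      CauchySeq (fun n => ((t n : E))) := by
    intro t ht
    rw [Metric.cauchySeq_iff] at ht ⊢
    intro δ hδ
    obtain ⟨N, hN⟩ := ht (Real.sqrt ε * δ) (by positivity)
    refine ⟨N, fun m hm n hn => ?_⟩
    have h1 := hN m hm n hn
    rw [dist_eq_norm, hκsub] at h1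
    rw [dist_eq_norm]
    have h2 := hlowκ (t m - t n)
    have h3 : ((t m : E)) - ((t n : E)) = ((t m - t n : S.domain) : E) := rfl
    rw [h3]
    have h4 : ‖κ (t m - t n)‖ ^ 2 < ε * δ ^ 2 := by
      have h5 := aux_lt_sq (norm_nonneg _) h1
      rwa [mul_pow, Real.sq_sqrt hε.le] at h5
    have h6 : ‖((t m - t n : S.domain) : E)‖ ^ 2 < δ ^ 2 :=
      (mul_lt_mul_iff_right₀ hε).1 (lt_of_le_of_lt h2 h4)
    exact aux_sq_lt (norm_nonneg _) hδ h6
  -- characterization of the form domain of QF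
  have hQFiff : ∀ f : E, f ∈ QF.domain ↔ ∃ m ∈ M, ∃ s : ℕ → S.domain,
      Tendsto (fun n => ((s n : E))) atTop (𝓝 f) ∧ Tendsto (fun n => κ (s n)) atTop (𝓝 m) := by
    intro f
    constructor
    · intro hf
      obtain ⟨s, hs1, hs2⟩ := (hQFdom f).1 hf
      have hc := hCauchy1 s hs2
      obtain ⟨m, hm⟩ := cauchySeq_tendsto_of_complete hc
      refine ⟨m, ?_, s, hs1, hm⟩
      have hmc : m ∈ closure (M₀ : Set E) :=
        mem_closure_of_tendsto hm (Eventually.of_forall fun n => ⟨s n, rfl⟩)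
      show m ∈ (M : Set E)
      rw [hMc]
      exact hmc
    · rintro ⟨m, hmM, s, hs1, hs2⟩
      exact (hQFdom f).2 ⟨s, hs1, hCauchy2 s hs2.cauchySeq⟩
  have hQFnorm : ∀ (g : E) (hg : g ∈ QF.domain) (m : E) (s : ℕ → S.domain),
      Tendsto (fun n => ((s n : E))) atTop (𝓝 g) → Tendsto (fun n => κ (s n)) atTop (𝓝 m) →
      ‖QF ⟨g, hg⟩‖ ^ 2 = ‖m‖ ^ 2 := by
    intro g hg m s h1 h2
    have hval := hQFval ⟨g, hg⟩ s h1 (hCauchy2 s h2.cauchySeq)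
    have hval2 : Tendsto (fun n => (⟪((s n : E)), S (s n)⟫).re) atTop (𝓝 (‖m‖ ^ 2)) := by
      have h3 : Tendsto (fun n => ‖κ (s n)‖ ^ 2) atTop (𝓝 (‖m‖ ^ 2)) := h2.norm.pow 2
      exact h3.congr fun n => hnormκ (s n)
    exact tendsto_nhds_unique hval hval2
  have hlowlim : ∀ (g m : E) (s : ℕ → S.domain),
      Tendsto (fun n => ((s n : E))) atTop (𝓝 g) → Tendsto (fun n => κ (s n)) atTop (𝓝 m) →
      ε * ‖g‖ ^ 2 ≤ ‖m‖ ^ 2 := by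
    intro g m s h1 h2
    have h3 : Tendsto (fun n => ε * ‖((s n : E))‖ ^ 2) atTop (𝓝 (ε * ‖g‖ ^ 2)) :=
      (h1.norm.pow 2).const_mul ε
    have h4 : Tendsto (fun n => ‖κ (s n)‖ ^ 2) atTop (𝓝 (‖m‖ ^ 2)) := h2.norm.pow 2
    exact le_of_tendsto_of_tendsto' h3 h4 fun n => hlowκ (s n)
  have hMcorr : ∀ m ∈ M, ∃ (g : E) (s : ℕ → S.domain),
      Tendsto (fun n => ((s n : E))) atTop (𝓝 g) ∧ Tendsto (fun n => κ (s n)) atTop (𝓝 m) := by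
    intro m hm
    have hm' : m ∈ closure (M₀ : Set E) := by
      rw [← hMc]
      exact hm
    obtain ⟨u, hu, hulim⟩ := mem_closure_iff_seq_limit.1 hm'
    have hu' : ∀ n, ∃ y : S.domain, κ y = u n := fun n => (hu n : u n ∈ M₀)
    choose t ht using hu'
    have hulim' : Tendsto (fun n => κ (t n)) atTop (𝓝 m) := by
      refine hulim.congr fun n => (ht n).symm
    have hc := hCauchyT t hulim'.cauchySeq
    obtain ⟨g, hg⟩ := cauchySeq_tendsto_of_complete hc
    exact ⟨g, t, hg, hulim'⟩
  -- the key surjectivity lemma: every vector orthogonal to ker S* is SK w for some w,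
  -- with QK w in M
  have hkey : ∀ z : E, (∀ v ∈ kerAdjoint S, ⟪v, z⟫ = 0) →
      ∃ (w : E) (hw : w ∈ SK.domain), SK ⟨w, hw⟩ = z ∧ QK ⟨w, hSKQK hw⟩ ∈ M := by
    intro z hz
    have hKo : kerAdjoint S = (LinearMap.range S.toFun)ᗮ := by
      ext v
      rw [Submodule.mem_orthogonal']
      constructor
      · rintro hv u ⟨f, rfl⟩
        exact hv f
      · intro hv f
        exact hv (S f) ⟨f, rfl⟩
    have hz2 : z ∈ (kerAdjoint S)ᗮ := (Submodule.mem_orthogonal _ z).2 fun u hu => hz u hu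
    rw [hKo, Submodule.orthogonal_orthogonal_eq_closure] at hz2
    have hz3 : z ∈ closure ((LinearMap.range S.toFun : Submodule ℂ E) : Set E) := by
      rw [← Submodule.topologicalClosure_coe]
      exact hz2
    obtain ⟨u, hu, hulim⟩ := mem_closure_iff_seq_limit.1 hz3
    have hu' : ∀ n, ∃ y : S.domain, S y = u n := fun n => (hu n : u n ∈ LinearMap.range S.toFun)
    choose t ht using hu'
    have hulim' : Tendsto (fun n => S (t n)) atTop (𝓝 z) := hulim.congr fun n => (ht n).symm
    -- lower bound ε ‖x‖ ≤ ‖S x‖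
    have hlow1 : ∀ x : S.domain, ε * ‖(x : E)‖ ≤ ‖S x‖ := by
      intro x
      rcases eq_or_ne ‖(x : E)‖ 0 with h0 | h0
      · rw [h0, mul_zero]
        exact norm_nonneg _
      · have hxpos : 0 < ‖(x : E)‖ := lt_of_le_of_ne (norm_nonneg _) (Ne.symm h0)
        have h1 := hpos x
        have h2 : (⟪(x : E), S x⟫).re ≤ ‖(x : E)‖ * ‖S x‖ :=
          (Complex.re_le_norm _).trans (norm_inner_le_norm _ _)
        have h3 : ε * ‖(x : E)‖ * ‖(x : E)‖ ≤ ‖S x‖ * ‖(x : E)‖ := by nlinarith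
        exact le_of_mul_le_mul_right h3 hxpos
    have hct : CauchySeq (fun n => ((t n : E))) := by
      have hcS : CauchySeq (fun n => S (t n)) := hulim'.cauchySeq
      rw [Metric.cauchySeq_iff] at hcS ⊢
      intro δ hδ
      obtain ⟨N, hN⟩ := hcS (ε * δ) (by positivity)
      refine ⟨N, fun m hm n hn => ?_⟩
      have h1 := hN m hm n hn
      rw [dist_eq_norm, ← S.map_sub] at h1
      rw [dist_eq_norm]
      have h2 := hlow1 (t m - t n)
      have h3 : ((t m : E)) - ((t n : E)) = ((t m - t n : S.domain) : E) := rfl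
      rw [h3]
      have h4 : ε * ‖((t m - t n : S.domain) : E)‖ < ε * δ := lt_of_le_of_lt h2 h1
      exact (mul_lt_mul_iff_right₀ hε).1 h4
    obtain ⟨w, hw⟩ := cauchySeq_tendsto_of_complete hct
    have hgraph : (w, z) ∈ S.closure.graph := by
      rw [← hclosable.graph_closure_eq_closure_graph]
      have hmem0 : (w, z) ∈ closure (S.graph : Set (E × E)) :=
        mem_closure_iff_seq_limit.2
          ⟨fun n => (((t n : E)), S (t n)), fun n => S.mem_graph (t n), hw.prodMk_nhds hulim'⟩
      show (w, z) ∈ (S.graph.topologicalClosure : Set (E × E))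
      rw [Submodule.topologicalClosure_coe]
      exact hmem0
    obtain ⟨a, ha1, ha2⟩ := S.closure.mem_graph_iff.1 hgraph
    have hwc : w ∈ S.closure.domain := by
      have h := a.2
      rw [show ((a : E) = w) from ha1] at h
      exact h
    have hwdom : w ∈ SK.domain := hclosdom hwc
    have hSKw : SK ⟨w, hwdom⟩ = z := by
      apply hdense.eq_of_inner_left ℂ
      intro s hs
      lift s to S.domain using hs
      rw [hSKadj ⟨w, hwdom⟩ s]
      have l1 : Tendsto (fun n => ⟪((t n : E)), S s⟫) atTop (𝓝 ⟪w, S s⟫) :=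
        hw.inner tendsto_const_nhds
      have l2 : Tendsto (fun n => ⟪S (t n), (s : E)⟫) atTop (𝓝 ⟪z, (s : E)⟫) :=
        hulim'.inner tendsto_const_nhds
      exact tendsto_nhds_unique (l1.congr fun n => (hsym (t n) s).symm) l2
    refine ⟨w, hwdom, hSKw, ?_⟩
    -- QK w is the limit of κ (t n), hence in M
    have hsubSK : ∀ n, w - ((t n : E)) ∈ SK.domain :=
      fun n => SK.domain.sub_mem hwdom (hSdom (t n).2)
    have hdk : ∀ n, QK ⟨w, hSKQK hwdom⟩ - κ (t n) = QK ⟨w - ((t n : E)), hSKQK (hsubSK n)⟩ := by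
      intro n
      have heq : (⟨w, hSKQK hwdom⟩ : QK.domain) - ⟨((t n : E)), hmemQ (t n)⟩
          = ⟨w - ((t n : E)), hSKQK (hsubSK n)⟩ := rfl
      have h2 : κ (t n) = QK ⟨((t n : E)), hmemQ (t n)⟩ := rfl
      rw [h2, ← QK.map_sub, heq]
    have hnormd : ∀ n, ‖QK ⟨w - ((t n : E)), hSKQK (hsubSK n)⟩‖ ^ 2
        = (⟪w - ((t n : E)), z - S (t n)⟫).re := by
      intro n
      rw [← hre, hpair (w - ((t n : E))) (w - ((t n : E))) (hsubSK n) (hsubSK n)]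
      have hsk : SK ⟨w - ((t n : E)), hsubSK n⟩ = z - S (t n) := by
        have heq : (⟨w - ((t n : E)), hsubSK n⟩ : SK.domain)
            = ⟨w, hwdom⟩ - ⟨((t n : E)), hSdom (t n).2⟩ := rfl
        rw [heq, SK.map_sub, hSKw, hSKs (t n) (hSdom (t n).2)]
      rw [hsk]
    have hlimd : Tendsto (fun n => κ (t n)) atTop (𝓝 (QK ⟨w, hSKQK hwdom⟩)) := by
      rw [tendsto_iff_norm_sub_tendsto_zero]
      have hb : ∀ n, ‖κ (t n) - QK ⟨w, hSKQK hwdom⟩‖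
          ≤ Real.sqrt (‖w - ((t n : E))‖ * ‖z - S (t n)‖) := by
        intro n
        have h1 : ‖κ (t n) - QK ⟨w, hSKQK hwdom⟩‖ ^ 2
            = (⟪w - ((t n : E)), z - S (t n)⟫).re := by
          rw [norm_sub_rev, hdk n, hnormd n]
        have h2 : (⟪w - ((t n : E)), z - S (t n)⟫).re ≤ ‖w - ((t n : E))‖ * ‖z - S (t n)‖ :=
          (Complex.re_le_norm _).trans (norm_inner_le_norm _ _)
        have h3 : ‖κ (t n) - QK ⟨w, hSKQK hwdom⟩‖ ^ 2 ≤ ‖w - ((t n : E))‖ * ‖z - S (t n)‖ :=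
          h1.le.trans h2
        have h4 := Real.sqrt_le_sqrt h3
        rwa [Real.sqrt_sq (norm_nonneg _)] at h4
      have hbl : Tendsto (fun n => Real.sqrt (‖w - ((t n : E))‖ * ‖z - S (t n)‖)) atTop (𝓝 0) := by
        have l1 : Tendsto (fun n => ‖w - ((t n : E))‖ * ‖z - S (t n)‖) atTop (𝓝 0) := by
          have l2 : Tendsto (fun n => w - ((t n : E))) atTop (𝓝 0) := by
            have := hw.const_sub w
            rwa [sub_self] at this
          have l3 : Tendsto (fun n => z - S (t n)) atTop (𝓝 0) := by
            have := hulim'.const_sub z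
            rwa [sub_self] at this
          have := (l2.norm.mul l3.norm)
          rwa [norm_zero, mul_zero] at this
        have := (Real.continuous_sqrt.tendsto 0).comp l1
        rwa [Real.sqrt_zero] at this
      exact squeeze_zero (fun n => norm_nonneg _) hb hbl
    exact hMclosed.mem_of_tendsto hlimd (Eventually.of_forall fun n => hκM (t n))
  -- ker S* is orthogonal to M
  have hKM : ∀ v ∈ kerAdjoint S, ∀ m' ∈ M, ⟪v, m'⟫ = 0 := by
    intro v hv m' hm'
    have hsubset : closure (M₀ : Set E) ⊆ {y : E | ⟪v, y⟫ = 0} := by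
      apply closure_minimal
      · rintro y ⟨s, rfl⟩
        exact hkerQK v hv ⟨(s : E), hmemQ s⟩
      · exact isClosed_eq (Continuous.inner continuous_const continuous_id) continuous_const
    refine hsubset ?_
    rw [← hMc]
    exact hm'
  -- everything orthogonal to both M and ker S* vanishes
  have hzlem : ∀ z : E, (∀ v ∈ kerAdjoint S, ⟪v, z⟫ = 0) → (∀ m' ∈ M, ⟪z, m'⟫ = 0) → z = 0 := by
    intro z hzK hzM
    obtain ⟨w, hwdom, hSKw, hQKwM⟩ := hkey z hzK
    have hQKx : QK ⟨QK ⟨w, hSKQK hwdom⟩, hQK2 hwdom⟩ = z := by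
      rw [hQKsqval' w hwdom (hQK2 hwdom), hSKw]
    have hx0 : ⟪(((⟨QK ⟨w, hSKQK hwdom⟩, hQK2 hwdom⟩ : QK.domain)) : E),
        QK ⟨QK ⟨w, hSKQK hwdom⟩, hQK2 hwdom⟩⟫ = 0 := by
      rw [hQKx]
      show ⟪QK ⟨w, hSKQK hwdom⟩, z⟫ = 0
      rw [← inner_conj_symm, hzM _ hQKwM, map_zero]
    have hall := aux_degCS QK hQKsym hQKpos _ hx0
    apply hdense.eq_zero_of_inner_right ℂ
    intro s hs
    lift s to S.domain using hs
    have h := hall ⟨(s : E), hmemQ s⟩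
    rwa [hQKx] at h
  -- QK maps its whole domain into M
  haveI : CompleteSpace M := hMclosed.completeSpace_coe
  have hQKM : ∀ f : QK.domain, QK f ∈ M := by
    intro f
    have h0 : QK f - ((M.orthogonalProjectionOnto (QK f)) : E) = 0 := by
      apply hzlem
      · intro v hv
        rw [inner_sub_right, hkerQK v hv f,
          hKM v hv _ (M.orthogonalProjectionOnto (QK f)).2, sub_zero]
      · intro m' hm'
        exact M.starProjection_inner_eq_zero (QK f) m' hm'
    have h1 : QK f = ((M.orthogonalProjectionOnto (QK f)) : E) := sub_eq_zero.1 h0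
    rw [h1]
    exact (M.orthogonalProjectionOnto (QK f)).2
  -- pairing identities
  have hfS : ∀ (f : QK.domain) (s : S.domain), ⟪(f : E), S s⟫ = ⟪QK f, κ s⟫ := by
    intro f s
    have h1 : QK ⟨κ s, hQK2 (hSdom s.2)⟩ = S s := by
      have h2 := hQKsqval' (s : E) (hSdom s.2) (hQK2 (hSdom s.2))
      rw [hSKs s (hSdom s.2)] at h2
      exact h2
    have h3 : ⟪(f : E), S s⟫ = ⟪(f : E), QK ⟨κ s, hQK2 (hSdom s.2)⟩⟫ := by rw [h1]
    rw [h3]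
    exact (hQKsym f ⟨κ s, hQK2 (hSdom s.2)⟩).symm
  have hcorrS : ∀ (g m : E) (s : ℕ → S.domain),
      Tendsto (fun n => ((s n : E))) atTop (𝓝 g) → Tendsto (fun n => κ (s n)) atTop (𝓝 m) →
      ∀ u : S.domain, ⟪g, S u⟫ = ⟪m, κ u⟫ := by
    intro g m s h1 h2 u
    have l1 : Tendsto (fun n => ⟪((s n : E)), S u⟫) atTop (𝓝 ⟪g, S u⟫) :=
      h1.inner tendsto_const_nhds
    have l2 : Tendsto (fun n => ⟪κ (s n), κ u⟫) atTop (𝓝 ⟪m, κ u⟫) :=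
      h2.inner tendsto_const_nhds
    exact tendsto_nhds_unique l1 (l2.congr fun n => hκ (s n) u)
  -- the inverse construction: every element of M is QK x for a canonical x
  have hxcon : ∀ m ∈ M, ∃ (x : E) (hx : x ∈ QK.domain),
      QK ⟨x, hx⟩ = m ∧ ∀ u : S.domain, ⟪x, S u⟫ = ⟪m, κ u⟫ := by
    intro m hm
    obtain ⟨w, hwdom, hSKw, hQKwM⟩ := hkey m fun v hv => hKM v hv m hm
    refine ⟨QK ⟨w, hSKQK hwdom⟩, hQK2 hwdom, ?_, ?_⟩
    · rw [hQKsqval' w hwdom (hQK2 hwdom), hSKw]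
    · intro u
      have h := hfS ⟨QK ⟨w, hSKQK hwdom⟩, hQK2 hwdom⟩ u
      rw [hQKsqval' w hwdom (hQK2 hwdom), hSKw] at h
      exact h
  refine ⟨?_, ?_, ?_⟩
  · -- the domain of QK is D(QF) + ker S*
    intro f
    constructor
    · intro hf
      have hfM := hQKM ⟨f, hf⟩
      obtain ⟨g, s, hs1, hs2⟩ := hMcorr _ hfM
      have hgQF : g ∈ QF.domain := (hQFiff g).2 ⟨QK ⟨f, hf⟩, hfM, s, hs1, hs2⟩
      refine ⟨g, hgQF, f - g, ?_, by abel⟩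
      intro u
      have hA : ⟪f, S u⟫ = ⟪QK ⟨f, hf⟩, κ u⟫ := hfS ⟨f, hf⟩ u
      have hB : ⟪f - g, S u⟫ = ⟪f, S u⟫ - ⟪g, S u⟫ := inner_sub_left _ _ _
      rw [hB, hA, hcorrS g _ s hs1 hs2 u, sub_self]
    · rintro ⟨g, hg, v, hv, rfl⟩
      obtain ⟨m, hmM, s, hs1, hs2⟩ := (hQFiff g).1 hg
      obtain ⟨x, hx, hQKx, hxS⟩ := hxcon m hmM
      have hgx : g - x ∈ kerAdjoint S := by
        intro u
        have hA : ⟪g - x, S u⟫ = ⟪g, S u⟫ - ⟪x, S u⟫ := inner_sub_left _ _ _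
        rw [hA, hcorrS g m s hs1 hs2 u, hxS u, sub_self]
      have hsum : g + v = x + ((g - x) + v) := by abel
      rw [hsum]
      exact QK.domain.add_mem hx (hSKQK (hKdom ((kerAdjoint S).add_mem hgx hv)))
  · -- trivial intersection
    rw [Submodule.eq_bot_iff]
    intro x hx
    obtain ⟨hx1, hx2⟩ := Submodule.mem_inf.1 hx
    obtain ⟨m, hmM, s, hs1, hs2⟩ := (hQFiff x).1 hx1
    have hm0 : ∀ u : S.domain, ⟪m, κ u⟫ = 0 := by
      intro u
      rw [← hcorrS x m s hs1 hs2 u]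
      exact hx2 u
    have hmm : ⟪m, m⟫ = 0 := by
      have l2 : Tendsto (fun n => ⟪m, κ (s n)⟫) atTop (𝓝 ⟪m, m⟫) :=
        tendsto_const_nhds.inner hs2
      exact tendsto_nhds_unique (l2.congr fun n => hm0 (s n)) tendsto_const_nhds
    have hm02 : m = 0 := inner_self_eq_zero.1 hmm
    have hl := hlowlim x m s hs1 hs2
    rw [hm02, norm_zero] at hl
    have hx0 : ‖x‖ ^ 2 ≤ 0 := by nlinarith [sq_nonneg ‖x‖]
    have hx00 : ‖x‖ = 0 := by nlinarith [norm_nonneg x, sq_nonneg ‖x‖]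
    exact norm_eq_zero.1 hx00
  · -- the norm identity
    intro g hg v hv hgv
    obtain ⟨m, hmM, s, hs1, hs2⟩ := (hQFiff g).1 hg
    obtain ⟨x, hx, hQKx, hxS⟩ := hxcon m hmM
    have hgx : g - x ∈ kerAdjoint S := by
      intro u
      have hA : ⟪g - x, S u⟫ = ⟪g, S u⟫ - ⟪x, S u⟫ := inner_sub_left _ _ _
      rw [hA, hcorrS g m s hs1 hs2 u, hxS u, sub_self]
    have hker2 : (g + v) - x ∈ kerAdjoint S := by
      have h := (kerAdjoint S).add_mem hgx hv
      have he : (g - x) + v = (g + v) - x := by abel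
      rwa [he] at h
    have hkdom : (g + v) - x ∈ QK.domain := hSKQK (hKdom hker2)
    have hsplit : (⟨g + v, hgv⟩ : QK.domain) = ⟨x, hx⟩ + ⟨(g + v) - x, hkdom⟩ := by
      apply Subtype.ext
      show g + v = x + ((g + v) - x)
      abel
    have hQKk : QK ⟨(g + v) - x, hkdom⟩ = 0 := hQKv _ hker2
    rw [hsplit, QK.map_add, hQKx, hQKk, add_zero]
    exact (hQFnorm g hg m s hs1 hs2).symm
end

section
/- Let A be a closed dissipative operator on a separable Hilbert space with dim ker(A* - i) < ∞, and let Â be a dissipative extension of A. Then Â is maximally dissipative if and only if dim( D(Â)/D(A) ) = dim ker(A* - i). -/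
open Filter Topology

local notation "⟪" x ", " y "⟫" => @inner ℂ _ _ x y

/-- For a densely defined operator `A`, the subspace `ker (A* - i)`, described without
reference to the adjoint as `{v : ∀ f ∈ D(A), ⟪v, A f⟫ = ⟪i v, f⟫}` (which says precisely
that `v ∈ D(A*)` and `A* v = i v`). -/
def eigKer {E : Type*} [NormedAddCommGroup E] [InnerProductSpace ℂ E]
    (A : E →ₗ.[ℂ] E) : Submodule ℂ E where
  carrier := {v | ∀ f : A.domain, ⟪v, A f⟫ = ⟪Complex.I • v, (f : E)⟫}
  add_mem' := by
    intro a b ha hb f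
    simp only [smul_add, inner_add_left, ha f, hb f]
  zero_mem' := by
    intro f
    simp
  smul_mem' := by
    intro c v hv f
    rw [smul_comm]
    simp only [inner_smul_left, hv f]

namespace Stmt19Aux

open Submodule

variable {E : Type*} [NormedAddCommGroup E] [InnerProductSpace ℂ E]

/-- The operator `X + i` as a linear map on the domain of `X`. -/
noncomputable def sh (X : E →ₗ.[ℂ] E) : X.domain →ₗ[ℂ] E :=
  X.toFun + Complex.I • X.domain.subtype

lemma sh_apply (X : E →ₗ.[ℂ] E) (f : X.domain) : sh X f = X f + Complex.I • (f : E) := rfl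

/-- The range of `X + i`. -/
noncomputable def ran (X : E →ₗ.[ℂ] E) : Submodule ℂ E := LinearMap.range (sh X)

lemma mem_ran_iff {X : E →ₗ.[ℂ] E} {x : E} :
    x ∈ ran X ↔ ∃ f : X.domain, X f + Complex.I • (f : E) = x := Iff.rfl

lemma normsq_sh (X : E →ₗ.[ℂ] E) (f : X.domain) :
    ‖sh X f‖ ^ 2 = ‖X f‖ ^ 2 + ‖(f : E)‖ ^ 2 + 2 * (⟪(f : E), X f⟫).im := by
  rw [sh_apply, @norm_add_sq ℂ]
  have h1 : ‖Complex.I • (f : E)‖ = ‖(f : E)‖ := by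
    rw [norm_smul]; simp
  have h2 : RCLike.re ⟪X f, Complex.I • (f : E)⟫ = (⟪(f : E), X f⟫).im := by
    rw [inner_smul_right]
    simp only [Complex.mul_re, Complex.I_re, Complex.I_im, RCLike.re_to_complex]
    have := inner_im_symm (𝕜 := ℂ) (X f) ((f : E))
    simp only [RCLike.im_to_complex] at this
    rw [this]; ring
  rw [h1, h2]; ring

lemma norm_le_sh {X : E →ₗ.[ℂ] E} (hX : ∀ f : X.domain, 0 ≤ (⟪(f : E), X f⟫).im)
    (f : X.domain) : ‖(f : E)‖ ≤ ‖sh X f‖ := by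
  nlinarith [normsq_sh X f, hX f, norm_nonneg (sh X f), norm_nonneg ((f : E)), norm_nonneg (X f)]

lemma normX_le_sh {X : E →ₗ.[ℂ] E} (hX : ∀ f : X.domain, 0 ≤ (⟪(f : E), X f⟫).im)
    (f : X.domain) : ‖X f‖ ≤ ‖sh X f‖ := by
  nlinarith [normsq_sh X f, hX f, norm_nonneg (sh X f), norm_nonneg ((f : E)), norm_nonneg (X f)]

lemma sh_inj {X : E →ₗ.[ℂ] E} (hX : ∀ f : X.domain, 0 ≤ (⟪(f : E), X f⟫).im) :
    Function.Injective (sh X) := by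
  rw [← LinearMap.ker_eq_bot, Submodule.eq_bot_iff]
  intro f hf
  have h := norm_le_sh hX f
  rw [LinearMap.mem_ker] at hf
  rw [hf] at h
  simp only [norm_zero] at h
  exact Subtype.ext (norm_le_zero_iff.mp h)

lemma ran_closed [CompleteSpace E] {X : E →ₗ.[ℂ] E}
    (hX : ∀ f : X.domain, 0 ≤ (⟪(f : E), X f⟫).im) (hc : X.IsClosed) :
    IsClosed (ran X : Set E) := by
  haveI : CompleteSpace X.graph := IsClosed.completeSpace_coe (hs := hc)
  let L : X.graph →L[ℂ] E :=
    ((ContinuousLinearMap.snd ℂ E E) + Complex.I • (ContinuousLinearMap.fst ℂ E E)).comp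
      X.graph.subtypeL
  have hLapp : ∀ g : X.graph, L g = (g : E × E).2 + Complex.I • (g : E × E).1 := fun g => rfl
  have hrange : Set.range L = (ran X : Set E) := by
    ext x
    simp only [Set.mem_range, SetLike.mem_coe, mem_ran_iff]
    constructor
    · rintro ⟨g, rfl⟩
      obtain ⟨f, hf1, hf2⟩ := X.mem_graph_iff.mp g.2
      exact ⟨f, by rw [hLapp, ← hf1, ← hf2]⟩
    · rintro ⟨f, rfl⟩
      exact ⟨⟨(f, X f), X.mem_graph f⟩, rfl⟩
  have hanti : AntilipschitzWith 1 L := by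
    apply L.antilipschitz_of_bound
    intro g
    obtain ⟨f, hf1, hf2⟩ := X.mem_graph_iff.mp g.2
    have hg : ‖g‖ = max ‖(g : E × E).1‖ ‖(g : E × E).2‖ := rfl
    have hL : L g = sh X f := by rw [hLapp, ← hf1, ← hf2, sh_apply]
    rw [hg, hL, NNReal.coe_one, one_mul, ← hf1, ← hf2]
    exact max_le (norm_le_sh hX f) (normX_le_sh hX f)
  have := hanti.isClosed_range L.uniformContinuous
  rwa [hrange] at this

lemma eigKer_eq_orth (A : E →ₗ.[ℂ] E) : eigKer A = (ran A)ᗮ := by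
  ext v
  have hv : v ∈ eigKer A ↔ ∀ f : A.domain, ⟪v, A f⟫ = ⟪Complex.I • v, (f : E)⟫ := Iff.rfl
  rw [hv, Submodule.mem_orthogonal]
  constructor
  · intro h u hu
    obtain ⟨f, rfl⟩ := mem_ran_iff.mp hu
    have := h f
    rw [inner_smul_left] at this
    rw [← inner_conj_symm]
    simp only [inner_add_right, inner_smul_right, this]
    simp [Complex.ext_iff]
  · intro h f
    have := h _ (mem_ran_iff.mpr ⟨f, rfl⟩)
    rw [← inner_conj_symm] at this
    simp only [inner_add_right, inner_smul_right, map_add] at this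
    have h2 : ⟪v, A f⟫ + Complex.I * ⟪v, (f : E)⟫ = 0 := by
      have := congrArg (starRingEnd ℂ) this
      simpa [mul_comm] using this
    rw [inner_smul_left]
    simp only [Complex.conj_I]
    linear_combination h2

/-- If `ran (B + i) = ⊤` then `B` is maximal dissipative. -/
lemma max_of_ran_top {B : E →ₗ.[ℂ] E} (htop : ran B = ⊤)
    (C : E →ₗ.[ℂ] E) (hBC : B ≤ C) (hCdiss : ∀ f : C.domain, 0 ≤ (⟪(f : E), C f⟫).im) :
    C = B := by
  have hdom : C.domain ≤ B.domain := by
    intro x hx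
    have : sh C ⟨x, hx⟩ ∈ ran B := htop ▸ Submodule.mem_top
    obtain ⟨f, hf⟩ := mem_ran_iff.mp this
    have hCf : B f = C (Submodule.inclusion hBC.1 f) := LinearPMap.apply_comp_inclusion hBC f
    have h2 : sh C (Submodule.inclusion hBC.1 f) = sh C ⟨x, hx⟩ := by
      rw [sh_apply, sh_apply, ← hCf]
      exact hf
    have := sh_inj hCdiss h2
    have hxf : (f : E) = x := congrArg Subtype.val this
    exact hxf ▸ f.2
  exact (LinearPMap.eq_of_le_of_domain_eq hBC (le_antisymm hBC.1 hdom)).symm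

lemma imcalc (c z d : ℂ) (r : ℝ) :
    (d + c * (Complex.I * (starRingEnd ℂ) z) + (starRingEnd ℂ) c * (-(Complex.I * z)) +
      (starRingEnd ℂ) c * (c * (Complex.I * (r : ℂ)))).im
      = d.im + Complex.normSq c * r := by
  simp [Complex.ext_iff, Complex.normSq_apply, Complex.mul_im, Complex.mul_re]
  ring

/-- A dissipative operator with a nonzero vector orthogonal to `ran (B + i)` admits a proper
dissipative extension. -/
lemma exists_ext {B : E →ₗ.[ℂ] E} (hBdiss : ∀ f : B.domain, 0 ≤ (⟪(f : E), B f⟫).im)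
    {v : E} (hv : v ∈ (ran B)ᗮ) (hv0 : v ≠ 0) :
    ∃ C : E →ₗ.[ℂ] E, B ≤ C ∧ (∀ f : C.domain, 0 ≤ (⟪(f : E), C f⟫).im) ∧ C ≠ B := by
  have hb : ∀ f : B.domain, ⟪v, B f⟫ = -(Complex.I * ⟪v, (f : E)⟫) := by
    intro f
    have h0 : ⟪B f + Complex.I • (f : E), v⟫ = 0 :=
      (Submodule.mem_orthogonal _ v).mp hv _ (mem_ran_iff.mpr ⟨f, rfl⟩)
    have h1 : ⟪v, B f + Complex.I • (f : E)⟫ = 0 := by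
      rw [← inner_conj_symm, h0, map_zero]
    rw [inner_add_right, inner_smul_right] at h1
    linear_combination h1
  have hvd : v ∉ B.domain := by
    intro h
    have h1 := hb ⟨v, h⟩
    have h2 := hBdiss ⟨v, h⟩
    rw [h1] at h2
    have hre := inner_self_eq_norm_sq (𝕜 := ℂ) v
    simp only [RCLike.re_to_complex] at hre
    have him2 : (-(Complex.I * ⟪v, v⟫)).im = -((⟪v, v⟫).re) := by
      simp [Complex.mul_im]
    have hcoe : ((⟨v, h⟩ : B.domain) : E) = v := rfl
    rw [hcoe, him2, hre] at h2
    have : (0 : ℝ) < ‖v‖ ^ 2 := pow_pos (norm_pos_iff.mpr hv0) 2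
    linarith
  refine ⟨B.supSpanSingleton v (Complex.I • v) hvd, LinearPMap.left_le_sup _ _ _, ?_, ?_⟩
  · intro g
    have hg2 : (g : E) ∈ B.domain ⊔ (ℂ ∙ v) := g.2
    rw [Submodule.mem_sup] at hg2
    obtain ⟨y, hy, z, hz, hyz⟩ := hg2
    obtain ⟨c, rfl⟩ := Submodule.mem_span_singleton.mp hz
    have hgeq : g = ⟨y + c • v, Submodule.mem_sup.2
        ⟨y, hy, _, Submodule.mem_span_singleton.2 ⟨c, rfl⟩, rfl⟩⟩ := Subtype.ext hyz.symm
    rw [hgeq, LinearPMap.supSpanSingleton_apply_mk (hx' := hy)]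
    set f' : B.domain := ⟨y, hy⟩
    have hyv : ⟪y, v⟫ = (starRingEnd ℂ) ⟪v, y⟫ := (inner_conj_symm _ _).symm
    have hinner : ⟪(y + c • v : E), B f' + c • (Complex.I • v)⟫
        = ⟪y, B f'⟫ + c * (Complex.I * (starRingEnd ℂ) ⟪v, y⟫)
          + (starRingEnd ℂ) c * (-(Complex.I * ⟪v, y⟫))
          + (starRingEnd ℂ) c * (c * (Complex.I * ((‖v‖ ^ 2 : ℝ) : ℂ))) := by
      rw [inner_add_left, inner_add_right, inner_add_right, inner_smul_left, inner_smul_left,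
        inner_smul_right, inner_smul_right, inner_smul_right, inner_smul_right, hb f', hyv,
        inner_self_eq_norm_sq_to_K]
      push_cast
      ring_nf
      rfl
    show 0 ≤ (⟪(y + c • v : E), B f' + c • (Complex.I • v)⟫).im
    rw [hinner, imcalc]
    have h4 : 0 ≤ Complex.normSq c * (‖v‖ ^ 2) :=
      mul_nonneg (Complex.normSq_nonneg c) (sq_nonneg _)
    have h5 : (⟪y, B f'⟫).im = (⟪(f' : E), B f'⟫).im := rfl
    rw [h5]
    linarith [hBdiss f']
  · intro hCB
    have hvmem : v ∈ (B.supSpanSingleton v (Complex.I • v) hvd).domain := by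
      rw [LinearPMap.domain_supSpanSingleton]
      exact Submodule.mem_sup_right (Submodule.mem_span_singleton_self v)
    rw [hCB] at hvmem
    exact hvd hvmem

end Stmt19Aux

open Stmt19Aux Submodule in
/-- **Criterion for maximal dissipativity of extensions.**
Let `A` be a closed, densely defined dissipative operator on a separable complex Hilbert
space with `dim ker (A* - i) < ∞`, and let `B` be a dissipative extension of `A`.  Then `B`
is maximally dissipative (i.e. has no nontrivial dissipative extension) if and only if
`dim (D(B) / D(A)) = dim ker (A* - i)`. -/
theorem stmt_19 {E : Type*} [NormedAddCommGroup E] [InnerProductSpace ℂ E] [CompleteSpace E]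
    [TopologicalSpace.SeparableSpace E]
    (A : E →ₗ.[ℂ] E) (hdense : Dense (A.domain : Set E)) (hclosed : A.IsClosed)
    (hdiss : ∀ f : A.domain, 0 ≤ (⟪(f : E), A f⟫).im)
    (hfin : FiniteDimensional ℂ (eigKer A))
    (B : E →ₗ.[ℂ] E) (hAB : A ≤ B)
    (hBdiss : ∀ f : B.domain, 0 ≤ (⟪(f : E), B f⟫).im) :
    (∀ C : E →ₗ.[ℂ] E, B ≤ C → (∀ f : C.domain, 0 ≤ (⟪(f : E), C f⟫).im) → C = B) ↔
      Module.rank ℂ (B.domain ⧸ A.domain.comap B.domain.subtype)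
        = Module.rank ℂ (eigKer A) := by
  classical
  set N : Submodule ℂ E := eigKer A with hNdef
  have hNo : N = (ran A)ᗮ := eigKer_eq_orth A
  -- `ran A ≤ ran B`
  have hRA_le_RB : ran A ≤ ran B := by
    rintro x ⟨f, rfl⟩
    refine mem_ran_iff.mpr ⟨Submodule.inclusion hAB.1 f, ?_⟩
    rw [← LinearPMap.apply_comp_inclusion hAB f, sh_apply]
    rfl
  -- `ran A` is closed, hence `ran A ⊔ N = ⊤` and `ran A ⊓ N = ⊥`
  have hcl : IsClosed ((ran A : Submodule ℂ E) : Set E) := ran_closed hdiss hclosed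
  haveI : CompleteSpace (ran A) := hcl.completeSpace_coe
  have htopAN : ran A ⊔ N = ⊤ := by
    rw [hNo]
    exact Submodule.sup_orthogonal_of_hasOrthogonalProjection
  have hAN_bot : ran A ⊓ N = ⊥ := by
    rw [hNo]
    exact (Submodule.orthogonal_disjoint _).eq_bot
  set W : Submodule ℂ E := ran B ⊓ N with hWdef
  have hWN : W ≤ N := inf_le_right
  have hWRB : W ≤ ran B := inf_le_left
  -- `ran B = ran A ⊔ W`
  have h6 : ran B = ran A ⊔ W := by
    apply le_antisymm
    · intro x hx
      have hxT : x ∈ ran A ⊔ N := htopAN ▸ Submodule.mem_top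
      obtain ⟨a, ha, n, hn, rfl⟩ := Submodule.mem_sup.mp hxT
      have hnw : n ∈ W := by
        refine Submodule.mem_inf.mpr ⟨?_, hn⟩
        have : n = (a + n) - a := by abel
        rw [this]
        exact Submodule.sub_mem _ hx (hRA_le_RB ha)
      exact Submodule.add_mem_sup ha hnw
    · exact sup_le hRA_le_RB hWRB
  -- rank of the quotient equals rank of `W`
  have hrk_chain : Module.rank ℂ (B.domain ⧸ A.domain.comap B.domain.subtype)
      = Module.rank ℂ W := by
    -- equivalence of quotients via `sh B`
    have hinjB : Function.Injective (sh B) := sh_inj hBdiss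
    let e : B.domain ≃ₗ[ℂ] LinearMap.range (sh B) := LinearEquiv.ofInjective (sh B) hinjB
    have hmap : (A.domain.comap B.domain.subtype).map (e : B.domain →ₗ[ℂ] _)
        = (ran A).comap (LinearMap.range (sh B)).subtype := by
      ext x
      simp only [Submodule.mem_map, Submodule.mem_comap]
      constructor
      · rintro ⟨fp, hfp, rfl⟩
        have hcoe : ((e fp : LinearMap.range (sh B)) : E) = sh B fp := rfl
        refine mem_ran_iff.mpr ⟨⟨(fp : E), hfp⟩, ?_⟩
        have hA : A ⟨(fp : E), hfp⟩ = B fp := hAB.2 rfl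
        rw [hA]
        exact (sh_apply B fp).symm
      · intro hx
        obtain ⟨g, hg⟩ := mem_ran_iff.mp hx
        refine ⟨Submodule.inclusion hAB.1 g, g.2, ?_⟩
        apply Subtype.ext
        show (sh B (Submodule.inclusion hAB.1 g) : E) = (x : E)
        rw [sh_apply, ← LinearPMap.apply_comp_inclusion hAB g]
        exact hg
    have equiv1 := Submodule.Quotient.equiv (A.domain.comap B.domain.subtype)
      ((ran A).comap (LinearMap.range (sh B)).subtype) e hmap
    rw [equiv1.rank_eq]
    -- second isomorphism theorem
    have e3 := LinearMap.quotientInfEquivSupQuotient W (ran A)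
    have hWRA : W ⊓ ran A = ⊥ := by
      rw [eq_bot_iff]
      intro x hx
      have : x ∈ ran A ⊓ N := Submodule.mem_inf.mpr ⟨hx.2, (Submodule.mem_inf.mp hx.1).2⟩
      rw [hAN_bot] at this
      exact this
    have hsup : W ⊔ ran A = ran B := by rw [sup_comm]; exact h6.symm
    rw [hsup, ← Submodule.comap_inf, hWRA, Submodule.comap_bot, Submodule.ker_subtype] at e3
    have e4 := Submodule.quotEquivOfEqBot (⊥ : Submodule ℂ W) rfl
    have e3' : (↥W ⧸ (⊥ : Submodule ℂ W)) ≃ₗ[ℂ]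
        (↥(LinearMap.range (sh B)) ⧸ Submodule.comap (LinearMap.range (sh B)).subtype (ran A)) := e3
    rw [← e3'.rank_eq, e4.rank_eq]
  -- transfer `W` into the finite-dimensional space `N`
  haveI : FiniteDimensional ℂ N := hfin
  set W' : Submodule ℂ N := W.comap N.subtype with hW'def
  have hrkW' : Module.rank ℂ W' = Module.rank ℂ W :=
    (Submodule.comapSubtypeEquivOfLe hWN).rank_eq
  have hW'top_iff : W' = ⊤ ↔ N ≤ W := Submodule.comap_subtype_eq_top
  -- final equivalence
  constructor
  · intro hmax
    have hRBtop : ran B = ⊤ := by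
      by_contra hne
      have hW'ne : W' ≠ ⊤ := by
        intro h
        apply hne
        have hNW : N ≤ W := hW'top_iff.mp h
        exact le_antisymm le_top (htopAN ▸ sup_le hRA_le_RB (le_trans hNW hWRB))
      have hOrth : W'ᗮ ≠ ⊥ := fun h => hW'ne (Submodule.orthogonal_eq_bot_iff.mp h)
      obtain ⟨vh, hvh, hvh0⟩ := Submodule.exists_mem_ne_zero_of_ne_bot hOrth
      set v : E := (vh : E) with hvdef
      have hv0 : v ≠ 0 := fun h => hvh0 (Subtype.ext h)
      have hvN : v ∈ N := vh.2
      have hvorth : v ∈ (ran B)ᗮ := by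
        rw [Submodule.mem_orthogonal, h6]
        intro u hu
        obtain ⟨a, ha, w, hw, rfl⟩ := Submodule.mem_sup.mp hu
        have h1 : ⟪a, v⟫ = 0 := by
          rw [hNo] at hvN
          exact (Submodule.mem_orthogonal _ v).mp hvN a ha
        have h2 : ⟪w, v⟫ = 0 := by
          have hwN : w ∈ N := hWN hw
          have hwW' : (⟨w, hwN⟩ : N) ∈ W' := by
            simp only [hW'def, Submodule.mem_comap, Submodule.coe_subtype]
            exact hw
          have := (Submodule.mem_orthogonal W' vh).mp hvh ⟨w, hwN⟩ hwW'
          rwa [Submodule.coe_inner] at this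
        rw [inner_add_left, h1, h2, add_zero]
      obtain ⟨C, hBC, hCd, hne'⟩ := exists_ext hBdiss hvorth hv0
      exact hne' (hmax C hBC hCd)
    have hWeqN : W = N := by rw [hWdef, hRBtop, top_inf_eq]
    rw [hrk_chain, hWeqN]
  · intro hrk
    have hrkW'N : Module.rank ℂ W' = Module.rank ℂ N := by
      rw [hrkW', ← hrk_chain]
      exact hrk
    have hW'top : W' = ⊤ := by
      apply Submodule.eq_top_of_finrank_eq
      have h1 : ((Module.finrank ℂ W' : Cardinal) : Cardinal)
          = ((Module.finrank ℂ N : Cardinal) : Cardinal) := by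
        rw [Module.finrank_eq_rank, Module.finrank_eq_rank]
        exact hrkW'N
      exact_mod_cast h1
    have hNW : N ≤ W := hW'top_iff.mp hW'top
    have hRBtop : ran B = ⊤ :=
      le_antisymm le_top (htopAN ▸ sup_le hRA_le_RB (le_trans hNW hWRB))
    exact max_of_ran_top hRBtop
end
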